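/- arXiv:math/0305414 — 9 statements merged into one kernel-verified Lean document; each statement's English description precedes it below -/
import Mathlib

section
/- For all φ with 0 < φ ≤ π, we have φ²/(2 - 2cos φ) ≤ 1 + φ²/2. -/
theorem sq_div_two_sub_two_cos_bound (φ : ℝ) (h0 : 0 < φ) (h1 : φ ≤ Real.pi) :
    φ^2/(2 - 2*Real.cos φ) ≤ 1 + φ^2/2 := by
  have hpi := Real.pi_gt_three
  have hpi2 := Real.pi_lt_d2
  obtain ⟨t, rfl⟩ : ∃ t, φ = 2 * t := ⟨φ / 2, by ring⟩
  have ht0 : 0 < t := by linarith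
  have ht1 : t ≤ Real.pi / 2 := by linarith
  have hs : 0 < Real.sin t := Real.sin_pos_of_pos_of_lt_pi ht0 (by linarith)
  have hcos : Real.cos (2 * t) = 1 - 2 * Real.sin t ^ 2 := by
    rw [Real.cos_two_mul, Real.cos_sq']; ring
  have hpos : 0 < 2 - 2 * Real.cos (2 * t) := by nlinarith [sq_nonneg (Real.sin t)]
  rw [div_le_iff₀ hpos]
  have key : 4 * t ^ 2 ≤ (4 + 8 * t ^ 2) * Real.sin t ^ 2 := by
    rcases le_or_gt t 1 with hle | hgt
    · have h3 : t - t ^ 3 / 4 < Real.sin t := by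
        have := Real.sin_gt_sub_cube ht0; nlinarith [pow_pos ht0 3]
      have ht2 : t ^ 2 ≤ 1 := by nlinarith
      have hnn : 0 ≤ t - t ^ 3 / 4 := by nlinarith [mul_nonneg ht0.le (sub_nonneg.2 ht2)]
      have hsq2 : (t - t ^ 3 / 4) ^ 2 ≤ Real.sin t ^ 2 := by nlinarith
      have hpoly : 4 * t ^ 2 ≤ (4 + 8 * t ^ 2) * (t - t ^ 3 / 4) ^ 2 := by
        nlinarith [sq_nonneg t, sq_nonneg (t * t), mul_pos ht0 ht0,
          mul_nonneg (mul_nonneg ht0.le ht0.le) (mul_nonneg ht0.le ht0.le),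
          mul_nonneg (mul_nonneg (sq_nonneg t) (sq_nonneg t)) (sub_nonneg.2 ht2)]
      calc 4 * t ^ 2 ≤ (4 + 8 * t ^ 2) * (t - t ^ 3 / 4) ^ 2 := hpoly
        _ ≤ (4 + 8 * t ^ 2) * Real.sin t ^ 2 := by
            apply mul_le_mul_of_nonneg_left hsq2 (by positivity)
    · have h2 := Real.mul_le_sin ht0.le ht1
      have hsq : (2 / Real.pi * t) ^ 2 ≤ Real.sin t ^ 2 := by
        have h5 : 0 ≤ 2 / Real.pi * t := by positivity
        nlinarith
      have hp : Real.pi ^ 2 < 12 := by nlinarith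
      have hππ : (0:ℝ) < Real.pi ^ 2 := by positivity
      have h4 : 4 * t ^ 2 ≤ (4 + 8 * t ^ 2) * ((2 / Real.pi * t) ^ 2) := by
        have heq : (2 / Real.pi * t) ^ 2 = 4 * t ^ 2 / Real.pi ^ 2 := by
          field_simp; ring
        rw [heq, show (4 + 8 * t ^ 2) * (4 * t ^ 2 / Real.pi ^ 2)
            = ((4 + 8 * t ^ 2) * (4 * t ^ 2)) / Real.pi ^ 2 by ring, le_div_iff₀ hππ]
        have ht2 : (0:ℝ) ≤ t ^ 2 - 1 := by nlinarith
        nlinarith [mul_pos (mul_pos ht0 ht0) (sub_pos.2 hp),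
          mul_nonneg (sq_nonneg t) ht2]
      calc 4 * t ^ 2 ≤ (4 + 8 * t ^ 2) * ((2 / Real.pi * t) ^ 2) := h4
        _ ≤ (4 + 8 * t ^ 2) * Real.sin t ^ 2 := by
            apply mul_le_mul_of_nonneg_left hsq (by positivity)
  rw [hcos]
  nlinarith [key]
end

section
/- For any two distinct points x, y on the unit circle in the plane, with arc(x,y) denoting the length of the shorter arc between them, we have 1/12 < 1/|x - y|² - 1/arc(x,y)² ≤ 1/4 - 1/π². -/
open InnerProductGeometry

set_option maxHeartbeats 1000000

private lemma chord_aux_deriv1 (x : ℝ) :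
    HasDerivAt (fun x : ℝ => x - x^3/6) (1 - x^2/2) x := by
  have h := (hasDerivAt_id x).sub ((hasDerivAt_pow 3 x).div_const 6)
  refine h.congr_deriv ?_
  norm_num
  ring

private lemma chord_aux_deriv2 (x : ℝ) : HasDerivAt (fun x : ℝ => x - x^3/6 + x^5/96)
    (1 - x^2/2 + 5*x^4/96) x := by
  have h := ((hasDerivAt_id x).sub ((hasDerivAt_pow 3 x).div_const 6)).add
    ((hasDerivAt_pow 5 x).div_const 96)
  refine h.congr_deriv ?_
  norm_num
  ring

/-- `sin t ≥ t - t^3/6` for `t ≥ 0`, by integrating `cos x ≥ 1 - x^2/2`. -/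
private lemma chord_sin_lb {t : ℝ} (ht : 0 ≤ t) : t - t^3/6 ≤ Real.sin t := by
  have h2 : (∫ x in (0:ℝ)..t, (1 - x^2/2)) = t - t^3/6 := by
    rw [intervalIntegral.integral_eq_sub_of_hasDerivAt
      (fun x _ => chord_aux_deriv1 x)
      ((by continuity : Continuous fun x : ℝ => 1 - x^2/2).intervalIntegrable 0 t)]
    norm_num
  have h1 : (∫ x in (0:ℝ)..t, (1 - x^2/2)) ≤ ∫ x in (0:ℝ)..t, Real.cos x := by
    apply intervalIntegral.integral_mono_on ht
    · exact (by continuity : Continuous fun x : ℝ => 1 - x^2/2).intervalIntegrable 0 t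
    · exact Real.continuous_cos.intervalIntegrable 0 t
    · exact fun x _ => Real.one_sub_sq_div_two_le_cos
  have h3 : (∫ x in (0:ℝ)..t, Real.cos x) = Real.sin t := by
    rw [integral_cos, Real.sin_zero, sub_zero]
  linarith

/-- `sin t ≤ t - t^3/6 + t^5/96` for `0 ≤ t ≤ 1`, by integrating the degree-4 bound
on `cos`. -/
private lemma chord_sin_ub {t : ℝ} (ht : 0 ≤ t) (ht1 : t ≤ 1) :
    Real.sin t ≤ t - t^3/6 + t^5/96 := by
  have h2 : (∫ x in (0:ℝ)..t, (1 - x^2/2 + 5*x^4/96)) = t - t^3/6 + t^5/96 := by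
    rw [intervalIntegral.integral_eq_sub_of_hasDerivAt
      (fun x _ => chord_aux_deriv2 x)
      ((by continuity : Continuous fun x : ℝ => 1 - x^2/2 + 5*x^4/96).intervalIntegrable 0 t)]
    norm_num
  have h1 : (∫ x in (0:ℝ)..t, Real.cos x) ≤ ∫ x in (0:ℝ)..t, (1 - x^2/2 + 5*x^4/96) := by
    apply intervalIntegral.integral_mono_on ht
    · exact Real.continuous_cos.intervalIntegrable 0 t
    · exact (by continuity :
        Continuous fun x : ℝ => 1 - x^2/2 + 5*x^4/96).intervalIntegrable 0 t
    · intro x hx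
      have hb := (abs_le.1 (Real.cos_bound (x := x)
        (by rw [abs_of_nonneg hx.1]; linarith [hx.2]))).2
      rw [abs_of_nonneg hx.1] at hb
      linarith
  have h3 : (∫ x in (0:ℝ)..t, Real.cos x) = Real.sin t := by
    rw [integral_cos, Real.sin_zero, sub_zero]
  linarith

private lemma chord_polyA {r : ℝ} (h0 : 0 < r) (h1 : r^2 ≤ 0.62) :
    4*(r - r^3/6 + r^5/96)^2*(1 - r^2/2 + 5*r^4/96)^2*(3+4*r^2) < 12*r^2 := by
  have key : 12*r^2 - 4*(r - r^3/6 + r^5/96)^2*(1 - r^2/2 + 5*r^4/96)^2*(3+4*r^2)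
      = r^6 * (25/2 - 82/9*r^2 + 1177/384*(r^2)^2 - 1031/1728*(r^2)^3 + 3991/55296*(r^2)^4
        - 451/82944*(r^2)^5 + 5045/21233664*(r^2)^6 - 25/5308416*(r^2)^7) := by ring
  have hu0 : (0:ℝ) ≤ r^2 := sq_nonneg r
  have hg : 0 < 25/2 - 82/9*r^2 + 1177/384*(r^2)^2 - 1031/1728*(r^2)^3 + 3991/55296*(r^2)^4
        - 451/82944*(r^2)^5 + 5045/21233664*(r^2)^6 - 25/5308416*(r^2)^7 := by
    nlinarith [mul_nonneg (mul_nonneg hu0 hu0) hu0, sq_nonneg (r^2), sq_nonneg ((r^2)^2),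
      sq_nonneg ((r^2)^3), mul_nonneg (sq_nonneg ((r^2)^2)) hu0,
      mul_le_of_le_one_left (sq_nonneg ((r^2)^2)) (by linarith : r^2 ≤ 1),
      mul_nonneg (mul_nonneg (sq_nonneg ((r^2)^2)) hu0) hu0,
      mul_le_mul_of_nonneg_left h1 (sq_nonneg (r^2)),
      mul_le_mul_of_nonneg_left h1 (mul_nonneg (sq_nonneg (r^2)) hu0),
      mul_le_mul_of_nonneg_left h1 (sq_nonneg ((r^2)^3))]
  nlinarith [mul_pos (pow_pos h0 6) hg]

private lemma chord_polyB1 {t : ℝ} (h0 : 0 < t) (h1 : t ≤ 1) :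
    Real.pi^2 * t^2 ≤ (t - t^3/6)^2 * (Real.pi^2 + (Real.pi^2-4)*t^2) := by
  have hP : (9.8695:ℝ) ≤ Real.pi^2 := by nlinarith [Real.pi_gt_d6]
  have hP2 : Real.pi^2 ≤ 9.8697 := by nlinarith [Real.pi_lt_d6, Real.pi_pos]
  have key : (t - t^3/6)^2 * (Real.pi^2 + (Real.pi^2-4)*t^2) - Real.pi^2 * t^2
      = t^4 * ((2*Real.pi^2/3 - 4) + (48-11*Real.pi^2)/36*t^2 + (Real.pi^2-4)/36*(t^2)^2) := by
    ring
  have ht2 : t^2 ≤ 1 := by nlinarith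
  have hbr : 0 ≤ (2*Real.pi^2/3 - 4) + (48-11*Real.pi^2)/36*t^2 + (Real.pi^2-4)/36*(t^2)^2 := by
    nlinarith [sq_nonneg (t^2), sq_nonneg t,
      mul_le_mul_of_nonpos_left ht2 (by nlinarith : (48-11*Real.pi^2)/36 ≤ 0)]
  nlinarith [mul_nonneg (pow_nonneg h0.le 4) hbr]

private lemma chord_polyB2' {p s : ℝ} (hp : 3.141592 ≤ p) (hp2 : p ≤ 3.141593)
    (hs0 : 0 ≤ s) (hs1 : s ≤ 0.5708) :
    p^2*(p/2-s)^2 ≤ (1 - s^2/2)^2 * (p^2 + (p^2-4)*(p/2-s)^2) := by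
  have hP : (9.8696:ℝ) ≤ p^2 := by nlinarith
  have hP2 : p^2 ≤ 9.86962 := by nlinarith
  have hP3 : (31.006:ℝ) ≤ p^3 := by
    nlinarith [mul_le_mul hP hp (by norm_num) (by linarith : (0:ℝ) ≤ p^2)]
  have hP3b : p^3 ≤ 31.0064 := by
    nlinarith [mul_le_mul hP2 hp2 (by linarith) (by norm_num : (0:ℝ) ≤ 9.86962)]
  have hP4 : p^4 ≤ 97.41 := by
    nlinarith [mul_le_mul hP2 hP2 (by nlinarith) (by norm_num : (0:ℝ) ≤ 9.86962)]
  have key : (1 - s^2/2)^2 * (p^2 + (p^2-4)*(p/2-s)^2) - p^2*(p/2-s)^2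
      = s * (4*p - (4 + p^4/4)*s + (p^3 - 4*p)*s^2 + (4 - p^2 + p^4/16)*s^3
          + (p - p^3/4)*s^4 + (p^2/4 - 1)*s^5) := by ring
  have hs2 : s^2 ≤ 0.32582 := by nlinarith
  have hc3 : 0 ≤ (4 - p^2 + p^4/16)*s^3 := by
    have : (0:ℝ) ≤ 4 - p^2 + p^4/16 := by
      nlinarith [mul_le_mul hP hP (by norm_num) (by nlinarith : (0:ℝ) ≤ p^2)]
    exact mul_nonneg this (pow_nonneg hs0 3)
  have hc5 : 0 ≤ (p^2/4 - 1)*s^5 := mul_nonneg (by nlinarith) (pow_nonneg hs0 5)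
  have hs4 : s^4 ≤ 0.32582 * s^2 := by nlinarith [sq_nonneg s]
  have hc4 : -1.5021 * s^2 ≤ (p - p^3/4)*s^4 := by
    have ha : (-4.61:ℝ) ≤ p - p^3/4 := by nlinarith
    have hb : p - p^3/4 ≤ 0 := by nlinarith
    nlinarith [mul_le_mul_of_nonpos_left hs4 hb, pow_nonneg hs0 4, sq_nonneg s]
  have hE : 0 ≤ 4*p - (4 + p^4/4)*s + (p^3 - 4*p)*s^2 + (4 - p^2 + p^4/16)*s^3
          + (p - p^3/4)*s^4 + (p^2/4 - 1)*s^5 := by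
    have e1 : (4 + p^4/4)*s ≤ 28.36*s := by nlinarith
    have e2 : 18.43*s^2 ≤ (p^3 - 4*p)*s^2 := by nlinarith [sq_nonneg s]
    nlinarith [sq_nonneg (s - 0.838)]
  nlinarith [mul_nonneg hs0 hE]

/-- Strict chord–arc inequality: `sin² t · (3 + t²) < 3 t²` on `(0, π/2]`. -/
private lemma chord_lemA {t : ℝ} (h0 : 0 < t) (h2 : t ≤ Real.pi/2) :
    Real.sin t ^ 2 * (3 + t^2) < 3 * t^2 := by
  have hpi : Real.pi ≤ 3.141593 := Real.pi_lt_d6.le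
  set r : ℝ := t/2 with hr
  have hr0 : 0 < r := by positivity
  have hr1 : r ≤ 0.7853983 := by rw [hr]; linarith
  have hrsq : r^2 ≤ 0.62 := by nlinarith
  have hsr0 : 0 ≤ Real.sin r :=
    Real.sin_nonneg_of_nonneg_of_le_pi hr0.le (by nlinarith [Real.pi_gt_d6])
  have hcr0 : 0 ≤ Real.cos r :=
    Real.cos_nonneg_of_mem_Icc ⟨by linarith, by nlinarith [Real.pi_gt_d6]⟩
  have hUs : Real.sin r ≤ r - r^3/6 + r^5/96 := chord_sin_ub hr0.le (by linarith)
  have hUc : Real.cos r ≤ 1 - r^2/2 + 5*r^4/96 := by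
    have hb := (abs_le.1 (Real.cos_bound (x := r)
      (by rw [abs_of_nonneg hr0.le]; linarith))).2
    rw [abs_of_nonneg hr0.le] at hb
    linarith
  have hst : Real.sin t = 2 * Real.sin r * Real.cos r := by
    rw [hr, ← Real.sin_two_mul]
    congr 1
    ring
  have hs2 : Real.sin r ^ 2 ≤ (r - r^3/6 + r^5/96)^2 := by nlinarith
  have hc2 : Real.cos r ^ 2 ≤ (1 - r^2/2 + 5*r^4/96)^2 := by nlinarith
  have hkey := chord_polyA hr0 hrsq
  have ht2 : t^2 = 4*r^2 := by rw [hr]; ring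
  have hUs0 : (0:ℝ) ≤ (r - r^3/6 + r^5/96)^2 := sq_nonneg _
  have hUc0 : (0:ℝ) ≤ (1 - r^2/2 + 5*r^4/96)^2 := sq_nonneg _
  have hsin2 : Real.sin t ^ 2 ≤ 4*(r - r^3/6 + r^5/96)^2*(1 - r^2/2 + 5*r^4/96)^2 := by
    rw [hst]
    calc (2 * Real.sin r * Real.cos r)^2 = 4 * Real.sin r ^2 * Real.cos r ^2 := by ring
    _ ≤ 4*(r - r^3/6 + r^5/96)^2*(1 - r^2/2 + 5*r^4/96)^2 := by
        nlinarith [sq_nonneg (Real.sin r), sq_nonneg (Real.cos r)]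
  have hpos : (0:ℝ) < 3 + t^2 := by positivity
  calc Real.sin t ^ 2 * (3 + t^2)
      ≤ 4*(r - r^3/6 + r^5/96)^2*(1 - r^2/2 + 5*r^4/96)^2 * (3 + t^2) := by
        exact mul_le_mul_of_nonneg_right hsin2 hpos.le
    _ = 4*(r - r^3/6 + r^5/96)^2*(1 - r^2/2 + 5*r^4/96)^2 * (3 + 4*r^2) := by rw [ht2]
    _ < 12*r^2 := hkey
    _ = 3 * t^2 := by rw [ht2]; ring

/-- Chord–arc inequality: `π² t² ≤ sin² t · (π² + (π²-4) t²)` on `(0, π/2]`. -/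
private lemma chord_lemB {t : ℝ} (h0 : 0 < t) (h2 : t ≤ Real.pi/2) :
    Real.pi^2 * t^2 ≤ Real.sin t ^ 2 * (Real.pi^2 + (Real.pi^2-4)*t^2) := by
  have hP : (9.8695:ℝ) ≤ Real.pi^2 := by nlinarith [Real.pi_gt_d6]
  have hden : (0:ℝ) ≤ Real.pi^2 + (Real.pi^2-4)*t^2 := by nlinarith [sq_nonneg t]
  rcases le_or_gt t 1 with h1 | h1
  · -- t ≤ 1 : use sin t ≥ t - t³/6 ≥ 0
    have hq0 : 0 ≤ t - t^3/6 := by nlinarith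
    have hq : t - t^3/6 ≤ Real.sin t := chord_sin_lb h0.le
    have hsq : (t - t^3/6)^2 ≤ Real.sin t ^2 := by nlinarith
    calc Real.pi^2 * t^2 ≤ (t - t^3/6)^2 * (Real.pi^2 + (Real.pi^2-4)*t^2) :=
          chord_polyB1 h0 h1
      _ ≤ Real.sin t ^2 * (Real.pi^2 + (Real.pi^2-4)*t^2) :=
          mul_le_mul_of_nonneg_right hsq hden
  · -- 1 < t ≤ π/2 : use sin t = cos (π/2 - t) ≥ 1 - (π/2-t)²/2 ≥ 0
    have hp : (3.141592:ℝ) ≤ Real.pi := Real.pi_gt_d6.le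
    have hp2 : Real.pi ≤ 3.141593 := Real.pi_lt_d6.le
    set s : ℝ := Real.pi/2 - t with hs
    have hs0 : 0 ≤ s := by rw [hs]; linarith
    have hs1 : s ≤ 0.5708 := by rw [hs]; linarith
    have hcs : 1 - s^2/2 ≤ Real.sin t := by
      have := Real.one_sub_sq_div_two_le_cos (x := s)
      rwa [hs, Real.cos_pi_div_two_sub] at this
    have hcs0 : (0:ℝ) ≤ 1 - s^2/2 := by nlinarith
    have hsq : (1 - s^2/2)^2 ≤ Real.sin t ^2 := by nlinarith
    have hkey := chord_polyB2' hp hp2 hs0 hs1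
    have ht : t = Real.pi/2 - s := by rw [hs]; ring
    calc Real.pi^2 * t^2 = Real.pi^2*(Real.pi/2-s)^2 := by rw [ht]
      _ ≤ (1 - s^2/2)^2 * (Real.pi^2 + (Real.pi^2-4)*(Real.pi/2-s)^2) := hkey
      _ = (1 - s^2/2)^2 * (Real.pi^2 + (Real.pi^2-4)*t^2) := by rw [← ht]
      _ ≤ Real.sin t ^2 * (Real.pi^2 + (Real.pi^2-4)*t^2) :=
          mul_le_mul_of_nonneg_right hsq hden

/-- On the unit circle (centered at the origin), with `arc(x,y)` the length of the
shorter arc (equal to the angle between `x` and `y` as vectors). -/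
theorem unit_circle_chord_arc_bounds (x y : EuclideanSpace ℝ (Fin 2))
    (hx : ‖x‖ = 1) (hy : ‖y‖ = 1) (hxy : x ≠ y) :
    1/12 < 1/dist x y^2 - 1/(angle x y)^2 ∧
    1/dist x y^2 - 1/(angle x y)^2 ≤ 1/4 - 1/Real.pi^2 := by
  set θ : ℝ := angle x y with hθ
  have hθπ : θ ≤ Real.pi := angle_le_pi x y
  have hθ0 : 0 < θ := by
    rcases (angle_nonneg x y).eq_or_lt with h | h
    · exfalso
      obtain ⟨hx0, r, hr, hyr⟩ := angle_eq_zero_iff.1 h.symm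
      have : ‖y‖ = r * ‖x‖ := by rw [hyr, norm_smul, Real.norm_eq_abs, abs_of_pos hr]
      rw [hx, hy] at this
      have : r = 1 := by linarith
      exact hxy (by rw [hyr, this, one_smul])
    · exact h
  have hcosθ : Real.cos θ = inner ℝ x y := by
    rw [hθ, cos_angle, hx, hy]
    norm_num
  have hd : dist x y ^ 2 = 2 - 2 * Real.cos θ := by
    rw [dist_eq_norm, norm_sub_sq_real x y, hx, hy, ← hcosθ]
    ring
  set t : ℝ := θ/2 with ht
  set s : ℝ := Real.sin t with hsdef
  have ht0 : 0 < t := by positivity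
  have htpi2 : t ≤ Real.pi/2 := by rw [ht]; linarith
  have hs0 : 0 < s := by
    rw [hsdef]
    exact Real.sin_pos_of_pos_of_lt_pi ht0 (by linarith [Real.pi_pos])
  have hcos2 : Real.cos θ = 1 - 2*s^2 := by
    have := Real.sin_sq_eq_half_sub (x := t)
    have h2t : 2*t = θ := by rw [ht]; ring
    rw [h2t] at this
    rw [hsdef]
    linarith
  have hd4 : dist x y ^ 2 = 4*s^2 := by rw [hd, hcos2]; ring
  have hθt : θ^2 = 4*t^2 := by rw [ht]; ring
  have hA := chord_lemA ht0 htpi2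
  have hB := chord_lemB ht0 htpi2
  rw [← hsdef] at hA hB
  have hpi0 : (0:ℝ) < Real.pi := Real.pi_pos
  constructor
  · have key : 1/dist x y^2 - 1/θ^2 - 1/12
        = (3*t^2 - s^2*(3+t^2))/(12*s^2*t^2) := by
      rw [hd4, hθt]
      field_simp
      ring
    have hpos : 0 < (3*t^2 - s^2*(3+t^2))/(12*s^2*t^2) := by
      apply div_pos (by linarith) (by positivity)
    linarith
  · have key : (1/4 - 1/Real.pi^2) - (1/dist x y^2 - 1/θ^2)
        = (s^2*(Real.pi^2+(Real.pi^2-4)*t^2) - Real.pi^2*t^2)/(4*Real.pi^2*s^2*t^2) := by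
      rw [hd4, hθt]
      field_simp
      ring
    have hpos : 0 ≤ (s^2*(Real.pi^2+(Real.pi^2-4)*t^2) - Real.pi^2*t^2)/(4*Real.pi^2*s^2*t^2) := by
      apply div_nonneg (by linarith) (by positivity)
    linarith
end

section
/- For any two distinct points x, y on a circle of radius R > 0, we have (1/12)·(1/R²) < 1/|x - y|² - 1/arc(x,y)² ≤ (1/4 - 1/π²)·(1/R²), where arc(x,y) is the length of the shorter arc between x and y. -/
open InnerProductGeometry

set_option maxHeartbeats 2000000

namespace CircleChordAux

open Real

lemma sin_ge_cubic : ∀ x : ℝ, 0 ≤ x → x - x^3/6 ≤ Real.sin x := by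
  have hmono : MonotoneOn (fun x : ℝ => Real.sin x - (x - x^3/6)) (Set.Ici 0) := by
    apply monotoneOn_of_deriv_nonneg (convex_Ici 0)
    · fun_prop
    · fun_prop
    · intro x hx
      have hd : HasDerivAt (fun x : ℝ => Real.sin x - (x - x^3/6))
          (Real.cos x - (1 - 3 * x^(3-1)/6)) x := by
        exact (Real.hasDerivAt_sin x).sub ((hasDerivAt_id x).sub
          ((hasDerivAt_pow 3 x).div_const 6))
      rw [hd.deriv]
      have := Real.one_sub_sq_div_two_le_cos (x := x)
      norm_num at this ⊢
      nlinarith [this]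
  intro x hx
  have := hmono (Set.self_mem_Ici) (Set.mem_Ici.2 hx) hx
  simp at this
  linarith

lemma cos_le_quartic : ∀ x : ℝ, 0 ≤ x → Real.cos x ≤ 1 - x^2/2 + x^4/24 := by
  have hmono : MonotoneOn (fun x : ℝ => (1 - x^2/2 + x^4/24) - Real.cos x) (Set.Ici 0) := by
    apply monotoneOn_of_deriv_nonneg (convex_Ici 0)
    · fun_prop
    · fun_prop
    · intro x hx
      rw [interior_Ici] at hx
      have hd : HasDerivAt (fun x : ℝ => (1 - x^2/2 + x^4/24) - Real.cos x)
          (((0 - 2 * x^(2-1)/2) + 4 * x^(4-1)/24) - (-Real.sin x)) x := by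
        exact ((((hasDerivAt_const x (1:ℝ)).sub ((hasDerivAt_pow 2 x).div_const 2)).add
          ((hasDerivAt_pow 4 x).div_const 24))).sub (Real.hasDerivAt_cos x)
      rw [hd.deriv]
      have := sin_ge_cubic x (le_of_lt hx)
      norm_num
      nlinarith [this]
  intro x hx
  have := hmono (Set.self_mem_Ici) (Set.mem_Ici.2 hx) hx
  simp at this
  linarith

lemma sin_le_quintic : ∀ x : ℝ, 0 ≤ x → Real.sin x ≤ x - x^3/6 + x^5/120 := by
  have hmono : MonotoneOn (fun x : ℝ => (x - x^3/6 + x^5/120) - Real.sin x) (Set.Ici 0) := by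
    apply monotoneOn_of_deriv_nonneg (convex_Ici 0)
    · fun_prop
    · fun_prop
    · intro x hx
      rw [interior_Ici] at hx
      have hd : HasDerivAt (fun x : ℝ => (x - x^3/6 + x^5/120) - Real.sin x)
          (((1 - 3 * x^(3-1)/6) + 5 * x^(5-1)/120) - Real.cos x) x := by
        exact (((hasDerivAt_id x).sub ((hasDerivAt_pow 3 x).div_const 6)).add
          ((hasDerivAt_pow 5 x).div_const 120)).sub (Real.hasDerivAt_sin x)
      rw [hd.deriv]
      have := cos_le_quartic x (le_of_lt hx)
      norm_num
      nlinarith [this]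
  intro x hx
  have := hmono (Set.self_mem_Ici) (Set.mem_Ici.2 hx) hx
  simp at this
  linarith

lemma keyB2core (w : ℝ) (hw0 : 0 ≤ w) (hw1 : w ≤ 0.5708)
    (pig : (3.141592:ℝ) < π) (pil : π < 3.141593)
    (hp2l : (9.8696:ℝ) < π^2) (hp2u : π^2 < 9.8697) :
    (π/2 - w)^2 * π^2 ≤ (1 - w^2/2)^2 * (π^2 * (1 + (π/2 - w)^2) - 4*(π/2 - w)^2) := by
  have hp3l : (31.006:ℝ) < π^3 := by nlinarith
  have hp3u : π^3 < 31.0064 := by nlinarith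
  have hp4l : (97.409:ℝ) < π^4 := by nlinarith
  have hp4u : π^4 < 97.41 := by nlinarith
  have hH : (0:ℝ) ≤ 4*π - w*(4 + π^4/4) + w^2*(π^3 - 4*π)
      + w^3*(4 - π^2 + π^4/16) + w^4*(π - π^3/4) + w^5*(π^2/4 - 1) := by
    have e2 : w*(4 + π^4/4) ≤ w*28.3525 :=
      mul_le_mul_of_nonneg_left (by linarith) hw0
    have e3 : w^2*18.4396 ≤ w^2*(π^3 - 4*π) :=
      mul_le_mul_of_nonneg_left (by linarith) (sq_nonneg w)
    have e4 : (0:ℝ) ≤ w^3*(4 - π^2 + π^4/16) :=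
      mul_nonneg (pow_nonneg hw0 3) (by linarith)
    have e5 : w^4*(-4.61001) ≤ w^4*(π - π^3/4) :=
      mul_le_mul_of_nonneg_left (by linarith) (pow_nonneg hw0 4)
    have e6 : (0:ℝ) ≤ w^5*(π^2/4 - 1) :=
      mul_nonneg (pow_nonneg hw0 5) (by linarith)
    have w2 : w^2 ≤ 0.32582 := by
      calc w^2 = w*w := sq w
      _ ≤ 0.5708*0.5708 := mul_le_mul hw1 hw1 hw0 (by norm_num)
      _ ≤ 0.32582 := by norm_num
    have e7 : w^4 ≤ 0.32582*w^2 := by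
      calc w^4 = w^2*w^2 := by ring
      _ ≤ 0.32582*w^2 := mul_le_mul_of_nonneg_right w2 (sq_nonneg w)
    have e8 : (0:ℝ) ≤ 12.566368 - 28.3525*w + 16.93*w^2 := by
      nlinarith [sq_nonneg (33.86*w - 28.3525)]
    linarith [sq_nonneg w]
  nlinarith [mul_nonneg hw0 hH]

lemma key (θ : ℝ) (h1 : 0 < θ) (h2 : θ ≤ π) :
    1/12 < 1/(2*(1 - Real.cos θ)) - 1/θ^2 ∧
    1/(2*(1 - Real.cos θ)) - 1/θ^2 ≤ 1/4 - 1/π^2 := by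
  have pig : (3.141592 : ℝ) < π := Real.pi_gt_d6
  have pil : π < 3.141593 := Real.pi_lt_d6
  set h : ℝ := θ/2 with hh
  have hh1 : 0 < h := by positivity
  have hh2 : h ≤ π/2 := by rw [hh]; linarith
  have hs : 0 < Real.sin h := Real.sin_pos_of_pos_of_lt_pi hh1 (by linarith)
  have hcosθ : Real.cos θ = 1 - 2 * Real.sin h ^ 2 := by
    have : θ = 2 * h := by rw [hh]; ring
    rw [this, Real.cos_two_mul', Real.cos_sq']
    ring
  set s : ℝ := Real.sin h with hsdef
  -- Claim A
  have hquint := sin_le_quintic h hh1.le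
  have hcub := sin_ge_cubic h hh1.le
  have hu : h^2 ≤ 2.4675 := by nlinarith
  have claimA : s^2 * (3 + h^2) < 3 * h^2 := by
    have hP : s ≤ h * (1 - h^2/6 + (h^2)^2/120) := by
      calc s ≤ h - h^3/6 + h^5/120 := hquint
      _ = h * (1 - h^2/6 + (h^2)^2/120) := by ring
    have hu0 : 0 < h^2 := by positivity
    have hinner : 0 < 1/5 - 13*h^2/360 + 37*(h^2)^2/14400 - (h^2)^3/14400 := by
      nlinarith [mul_nonneg (sub_nonneg.2 hu) hu0.le, sq_nonneg (h^2)]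
    have hcore : (1 - h^2/6 + (h^2)^2/120)^2 * (3 + h^2) < 3 := by
      have hid : (1 - h^2/6 + (h^2)^2/120)^2 * (3 + h^2)
          = 3 - h^2*h^2*(1/5 - 13*h^2/360 + 37*(h^2)^2/14400 - (h^2)^3/14400) := by ring
      nlinarith [mul_pos (mul_pos hu0 hu0) hinner]
    have hs2 : s^2 ≤ (h * (1 - h^2/6 + (h^2)^2/120))^2 := by
      nlinarith [hP, hs]
    calc s^2 * (3 + h^2) ≤ (h * (1 - h^2/6 + (h^2)^2/120))^2 * (3 + h^2) :=
          mul_le_mul_of_nonneg_right hs2 (by positivity)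
    _ = h^2 * ((1 - h^2/6 + (h^2)^2/120)^2 * (3 + h^2)) := by ring
    _ < h^2 * 3 := mul_lt_mul_of_pos_left hcore hu0
    _ = 3 * h^2 := by ring
  -- Claim B
  have hp2l : (9.8696:ℝ) < π^2 := by nlinarith
  have hp2u : π^2 < 9.8697 := by nlinarith
  have claimB : h^2 * π^2 ≤ s^2 * (π^2 * (1 + h^2) - 4*h^2) := by
    have hF : (0:ℝ) ≤ π^2 * (1 + h^2) - 4*h^2 := by nlinarith [sq_nonneg h]
    rcases le_or_gt h 1 with hc | hc
    · have hQ : h * (1 - h^2/6) ≤ s := by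
        calc h * (1 - h^2/6) = h - h^3/6 := by ring
        _ ≤ s := hcub
      have hQ0 : 0 ≤ h * (1 - h^2/6) := by nlinarith
      have hu0 : (0:ℝ) ≤ h^2 := sq_nonneg h
      have hinner : (0:ℝ) ≤ (2*π^2/3 - 4) + h^2*(4/3 - 11*π^2/36) + (h^2)^2*(π^2-4)/36 := by
        nlinarith [mul_nonneg (sub_nonneg.2 hc) hh1.le, sq_nonneg (h^2), sq_nonneg (1-h^2)]
      have hcore : π^2 ≤ (1 - h^2/6)^2 * (π^2 * (1 + h^2) - 4*h^2) := by
        have hid : (1 - h^2/6)^2 * (π^2 * (1 + h^2) - 4*h^2) - π^2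
            = h^2 * ((2*π^2/3 - 4) + h^2*(4/3 - 11*π^2/36) + (h^2)^2*(π^2-4)/36) := by ring
        nlinarith [mul_nonneg hu0 hinner]
      have hs2 : (h * (1 - h^2/6))^2 ≤ s^2 := by nlinarith [hQ, hQ0]
      calc h^2 * π^2 ≤ h^2 * ((1 - h^2/6)^2 * (π^2 * (1 + h^2) - 4*h^2)) :=
            mul_le_mul_of_nonneg_left hcore hu0
      _ = (h * (1 - h^2/6))^2 * (π^2 * (1 + h^2) - 4*h^2) := by ring
      _ ≤ s^2 * (π^2 * (1 + h^2) - 4*h^2) := mul_le_mul_of_nonneg_right hs2 hF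
    · set w : ℝ := π/2 - h with hw
      have hw0 : 0 ≤ w := by rw [hw]; linarith
      have hw1 : w ≤ 0.5708 := by rw [hw]; nlinarith
      have hsw : s = Real.cos w := by rw [hsdef, hw, Real.cos_pi_div_two_sub]
      have hcw : 1 - w^2/2 ≤ Real.cos w := Real.one_sub_sq_div_two_le_cos
      have hcw0 : (0:ℝ) ≤ 1 - w^2/2 := by nlinarith
      have hhw : h = π/2 - w := by rw [hw]; ring
      have hstep : (π/2 - w)^2 * π^2
          ≤ (1 - w^2/2)^2 * (π^2 * (1 + (π/2 - w)^2) - 4*(π/2 - w)^2) :=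
        keyB2core w hw0 hw1 pig pil hp2l hp2u
      have hc2 : (1 - w^2/2)^2 ≤ Real.cos w ^2 := by nlinarith [hcw, hcw0]
      have hF' : (0:ℝ) ≤ π^2 * (1 + (π/2 - w)^2) - 4*(π/2 - w)^2 := by
        rw [← hhw]; exact hF
      rw [hsw, hhw]
      calc (π/2 - w)^2 * π^2
          ≤ (1 - w^2/2)^2 * (π^2 * (1 + (π/2 - w)^2) - 4*(π/2 - w)^2) := hstep
      _ ≤ Real.cos w ^2 * (π^2 * (1 + (π/2 - w)^2) - 4*(π/2 - w)^2) :=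
          mul_le_mul_of_nonneg_right hc2 hF'
  -- assemble
  have hth2 : θ^2 = 4 * h^2 := by rw [hh]; ring
  have h1c : 1 - Real.cos θ = 2 * s^2 := by rw [hcosθ]; ring
  have hπ : (0:ℝ) < π := by linarith
  constructor
  · have expand : 1/(2*(1 - Real.cos θ)) - 1/θ^2 - 1/12
        = (3*h^2 - s^2*(3 + h^2)) / (12 * s^2 * h^2) := by
      rw [h1c, hth2]
      field_simp
      ring
    have : 0 < (3*h^2 - s^2*(3 + h^2)) / (12 * s^2 * h^2) := by
      apply div_pos (by linarith) (by positivity)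
    linarith
  · have expand : (1/4 - 1/π^2) - (1/(2*(1 - Real.cos θ)) - 1/θ^2)
        = (s^2 * (π^2 * (1 + h^2) - 4*h^2) - h^2 * π^2) / (4 * π^2 * s^2 * h^2) := by
      rw [h1c, hth2]
      field_simp
      ring
    have : 0 ≤ (s^2 * (π^2 * (1 + h^2) - 4*h^2) - h^2 * π^2) / (4 * π^2 * s^2 * h^2) := by
      apply div_nonneg (by linarith) (by positivity)
    linarith

end CircleChordAux

/-- On a circle of radius `R` (centered at the origin), the arc length between `x`
and `y` is `R` times the angle between them as vectors. -/
theorem circle_chord_arc_bounds (R : ℝ) (hR : 0 < R) (x y : EuclideanSpace ℝ (Fin 2))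
    (hx : ‖x‖ = R) (hy : ‖y‖ = R) (hxy : x ≠ y) :
    (1/12) * (1/R^2) < 1/dist x y^2 - 1/(R * angle x y)^2 ∧
    1/dist x y^2 - 1/(R * angle x y)^2 ≤ (1/4 - 1/Real.pi^2) * (1/R^2) := by
  set θ := angle x y with hθ
  have hθpi : θ ≤ Real.pi := angle_le_pi x y
  have hθpos : 0 < θ := by
    rcases (angle_nonneg x y).lt_or_eq with h | h
    · exact h
    · exfalso
      obtain ⟨hx0, r, hr, hyr⟩ := angle_eq_zero_iff.mp h.symm
      have hnorm : ‖y‖ = r * ‖x‖ := by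
        rw [hyr, norm_smul, Real.norm_eq_abs, abs_of_pos hr]
      rw [hx, hy] at hnorm
      have hr1 : r = 1 := by
        have h1 : r * R = 1 * R := by linarith
        exact mul_right_cancel₀ hR.ne' h1
      exact hxy (by rw [hyr, hr1, one_smul])
  have hinner : (inner ℝ x y : ℝ) = R^2 * Real.cos θ := by
    have := InnerProductGeometry.cos_angle_mul_norm_mul_norm x y
    rw [hx, hy] at this
    rw [← this]; ring
  have hdist : dist x y ^ 2 = R^2 * (2 * (1 - Real.cos θ)) := by
    rw [dist_eq_norm, @norm_sub_sq_real, hx, hy, hinner]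
    ring
  have hkey := CircleChordAux.key θ hθpos hθpi
  have hc1 : 0 < 1 - Real.cos θ := by
    have hs : 0 < Real.sin (θ/2) :=
      Real.sin_pos_of_pos_of_lt_pi (by linarith) (by linarith [Real.pi_pos])
    have hct : Real.cos θ = 1 - 2 * Real.sin (θ/2) ^ 2 := by
      rw [show θ = 2 * (θ/2) by ring, Real.cos_two_mul', Real.cos_sq']
      ring
    nlinarith
  have hR2 : (0:ℝ) < 1/R^2 := by positivity
  have hrw : 1/dist x y^2 - 1/(R*θ)^2
      = (1/R^2) * (1/(2*(1 - Real.cos θ)) - 1/θ^2) := by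
    rw [hdist, mul_pow]
    field_simp
  rw [hrw]
  constructor
  · nlinarith [mul_lt_mul_of_pos_right hkey.1 hR2]
  · nlinarith [mul_le_mul_of_nonneg_right hkey.2 hR2.le]
end

section
/- Let 0 < r < R be radii of two circles and let 0 < a < πr. If x, y are the endpoints of an arc of length a on the circle of radius r, and X, Y are the endpoints of an arc of length a on the circle of radius R, then 0 < 1/|x-y|² - 1/|X-Y|² < (1/4 - 1/π²)·(1/r²). -/
open Real Set

/-- `sin x ≥ x - x³/6` for `x ≥ 0`. -/
lemma aux_sin_ge_cubic {x : ℝ} (hx : 0 ≤ x) : x - x ^ 3 / 6 ≤ Real.sin x := by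
  have hd : ∀ y : ℝ, HasDerivAt (fun y : ℝ => Real.sin y - (y - y ^ 3 / 6))
      (Real.cos y - (1 - 3 * y ^ 2 / 6)) y := by
    intro y
    have := (Real.hasDerivAt_sin y).sub (((hasDerivAt_id y).sub
      (((hasDerivAt_id y).pow 3).div_const 6)))
    simpa [Pi.sub_def] using this
  have mono : MonotoneOn (fun y : ℝ => Real.sin y - (y - y ^ 3 / 6)) (Ici (0:ℝ)) := by
    apply monotoneOn_of_deriv_nonneg (convex_Ici 0)
    · exact (Real.continuous_sin.sub (continuous_id.sub
        ((continuous_pow 3).div_const 6))).continuousOn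
    · intro y _
      exact (hd y).differentiableAt.differentiableWithinAt
    · intro y _
      rw [(hd y).deriv]
      have := Real.one_sub_sq_div_two_le_cos (x := y)
      nlinarith
  have h0 := mono (self_mem_Ici) (mem_Ici.2 hx) hx
  simpa using h0

/-- `cos x ≤ 1 - x²/2 + x⁴/24` for `x ≥ 0`. -/
lemma aux_cos_le_quartic {x : ℝ} (hx : 0 ≤ x) :
    Real.cos x ≤ 1 - x ^ 2 / 2 + x ^ 4 / 24 := by
  have hd : ∀ y : ℝ, HasDerivAt (fun y : ℝ => (1 - y ^ 2 / 2 + y ^ 4 / 24) - Real.cos y)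
      ((0 - 2 * y / 2 + 4 * y ^ 3 / 24) - (-Real.sin y)) y := by
    intro y
    have h1 : HasDerivAt (fun y : ℝ => 1 - y ^ 2 / 2 + y ^ 4 / 24)
        (0 - 2 * y / 2 + 4 * y ^ 3 / 24) y := by
      have := ((hasDerivAt_const y (1:ℝ)).sub (((hasDerivAt_id y).pow 2).div_const 2)).add
        (((hasDerivAt_id y).pow 4).div_const 24)
      simpa [Pi.sub_def, Pi.add_def] using this
    exact h1.sub (Real.hasDerivAt_cos y)
  have mono : MonotoneOn (fun y : ℝ => (1 - y ^ 2 / 2 + y ^ 4 / 24) - Real.cos y)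
      (Ici (0:ℝ)) := by
    apply monotoneOn_of_deriv_nonneg (convex_Ici 0)
    · exact (((continuous_const.sub ((continuous_pow 2).div_const 2)).add
        ((continuous_pow 4).div_const 24)).sub Real.continuous_cos).continuousOn
    · intro y _
      exact (hd y).differentiableAt.differentiableWithinAt
    · intro y hy
      rw [(hd y).deriv]
      rw [interior_Ici] at hy
      have := aux_sin_ge_cubic (le_of_lt hy)
      nlinarith
  have h0 := mono (self_mem_Ici) (mem_Ici.2 hx) hx
  simp at h0
  linarith

/-- `x³ cos x < sin³ x` on `(0, π/2)`. -/
lemma aux_cube_lt {x : ℝ} (hx : 0 < x) (hx2 : x < Real.pi / 2) :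
    x ^ 3 * Real.cos x < Real.sin x ^ 3 := by
  have hs := aux_sin_ge_cubic hx.le
  have hc := aux_cos_le_quartic hx.le
  have hxlt : x < 2 := lt_of_lt_of_le hx2 (by nlinarith [Real.pi_lt_d2])
  have hpos : 0 < x - x ^ 3 / 6 := by nlinarith
  have hcube : (x - x ^ 3 / 6) ^ 3 ≤ Real.sin x ^ 3 :=
    pow_le_pow_left₀ hpos.le hs 3
  have h1 : x ^ 3 * Real.cos x ≤ x ^ 3 * (1 - x ^ 2 / 2 + x ^ 4 / 24) := by
    nlinarith [pow_pos hx 3]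
  have h2 : x ^ 3 * (1 - x ^ 2 / 2 + x ^ 4 / 24) < (x - x ^ 3 / 6) ^ 3 := by
    nlinarith [mul_pos (pow_pos hx 7) (show (0:ℝ) < 9 - x ^ 2 by nlinarith)]
  linarith

/-- sinc is strictly decreasing: `u sin v < v sin u` for `0 < u < v < π/2`. -/
lemma aux_sinc_anti {u v : ℝ} (hu : 0 < u) (huv : u < v) (hv : v < Real.pi / 2) :
    u * Real.sin v < v * Real.sin u := by
  have hd : ∀ x ∈ Ioo (0:ℝ) (Real.pi/2), HasDerivAt (fun x : ℝ => Real.sin x / x)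
      ((Real.cos x * x - Real.sin x * 1) / x ^ 2) x := fun x hx =>
    (Real.hasDerivAt_sin x).div (hasDerivAt_id x) (ne_of_gt hx.1)
  have anti : StrictAntiOn (fun x : ℝ => Real.sin x / x) (Ioo 0 (Real.pi/2)) := by
    apply strictAntiOn_of_deriv_neg (convex_Ioo 0 (Real.pi/2))
    · exact ContinuousOn.div Real.continuous_sin.continuousOn continuousOn_id
        (fun x hx => ne_of_gt hx.1)
    · intro x hx
      rw [interior_Ioo] at hx
      rw [(hd x hx).deriv]
      have hc : 0 < Real.cos x := Real.cos_pos_of_mem_Ioo ⟨by linarith [hx.1], hx.2⟩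
      have ht : x < Real.tan x := Real.lt_tan hx.1 hx.2
      rw [Real.tan_eq_sin_div_cos, lt_div_iff₀ hc] at ht
      apply div_neg_of_neg_of_pos
      · nlinarith
      · exact pow_pos hx.1 2
  have h := anti ⟨hu, huv.trans hv⟩ ⟨hu.trans huv, hv⟩ huv
  simp only at h
  rw [div_lt_div_iff₀ (hu.trans huv) hu] at h
  linarith

/-- `1/sin²v - 1/v² < 1 - 4/π²` for `0 < v < π/2`. -/
lemma aux_H_lt {v : ℝ} (hv : 0 < v) (hv2 : v < Real.pi / 2) :
    1 / Real.sin v ^ 2 - 1 / v ^ 2 < 1 - 4 / Real.pi ^ 2 := by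
  have hpi2 : 0 < Real.pi / 2 := Real.pi_div_two_pos
  set H : ℝ → ℝ := fun x => (Real.sin x ^ 2)⁻¹ - (x ^ 2)⁻¹ with hH
  have hsinpos : ∀ x ∈ Ioc (0:ℝ) (Real.pi/2), 0 < Real.sin x := fun x hx =>
    Real.sin_pos_of_pos_of_lt_pi hx.1 (lt_of_le_of_lt hx.2 (by linarith [Real.pi_pos]))
  have mono : StrictMonoOn H (Ioc 0 (Real.pi/2)) := by
    apply strictMonoOn_of_deriv_pos (convex_Ioc 0 (Real.pi/2))
    · apply ContinuousOn.sub
      · exact ContinuousOn.inv₀ (Real.continuous_sin.pow 2).continuousOn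
          (fun x hx => by have := hsinpos x hx; positivity)
      · exact ContinuousOn.inv₀ (continuous_pow 2).continuousOn
          (fun x hx => by have := hx.1; positivity)
    · intro x hx
      rw [interior_Ioc] at hx
      have hs : 0 < Real.sin x := hsinpos x ⟨hx.1, hx.2.le⟩
      have hx0 : 0 < x := hx.1
      have hd : HasDerivAt H
          (-(2 * Real.sin x ^ 1 * Real.cos x) / (Real.sin x ^ 2) ^ 2
            - -(2 * x ^ 1 * 1) / (x ^ 2) ^ 2) x := by
        exact (((Real.hasDerivAt_sin x).pow 2).inv (pow_ne_zero 2 hs.ne')).sub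
          (((hasDerivAt_id x).pow 2).inv (pow_ne_zero 2 hx0.ne'))
      rw [hd.deriv]
      have key : x ^ 3 * Real.cos x < Real.sin x ^ 3 := aux_cube_lt hx0 hx.2
      have h1 : 2 * Real.sin x * Real.cos x / (Real.sin x ^ 2) ^ 2 < 2 * x / (x ^ 2) ^ 2 := by
        rw [div_lt_div_iff₀ (by positivity) (by positivity)]
        nlinarith [mul_pos hx0 hs]
      simp only [pow_one, mul_one]
      have h2 : -(2 * Real.sin x * Real.cos x) / (Real.sin x ^ 2) ^ 2
          = -(2 * Real.sin x * Real.cos x / (Real.sin x ^ 2) ^ 2) := by ring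
      have h3 : -(2 * x) / (x ^ 2) ^ 2 = -(2 * x / (x ^ 2) ^ 2) := by ring
      rw [h2, h3]
      linarith
  have h := mono (mem_Ioc.2 ⟨hv, hv2.le⟩) (mem_Ioc.2 ⟨hpi2, le_refl _⟩) hv2
  have hHpi : H (Real.pi/2) = 1 - 4 / Real.pi ^ 2 := by
    rw [hH]
    simp only [Real.sin_pi_div_two]
    have hpi : Real.pi ≠ 0 := Real.pi_ne_zero
    field_simp
    ring
  rw [hHpi] at h
  simpa [hH, one_div] using h

/-- Chords subtending arcs of the same length `a` on circles of radii `r < R`: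
`|x-y|² = r²(2-2cos(a/r))`, `|X-Y|² = R²(2-2cos(a/R))`. -/
theorem chords_on_different_circles (r R a : ℝ) (hr : 0 < r) (hrR : r < R)
    (ha0 : 0 < a) (ha : a < Real.pi * r) :
    0 < 1/(r^2*(2 - 2*Real.cos (a/r))) - 1/(R^2*(2 - 2*Real.cos (a/R))) ∧
    1/(r^2*(2 - 2*Real.cos (a/r))) - 1/(R^2*(2 - 2*Real.cos (a/R)))
      < (1/4 - 1/Real.pi^2) * (1/r^2) := by
  have hR : 0 < R := hr.trans hrR
  set v : ℝ := a / (2*r) with hvdef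
  set u : ℝ := a / (2*R) with hudef
  have hv0 : 0 < v := div_pos ha0 (by linarith)
  have hu0 : 0 < u := div_pos ha0 (by linarith)
  have huv : u < v := by
    apply div_lt_div_of_pos_left ha0 (by linarith) (by linarith)
  have hv2 : v < Real.pi / 2 := by
    rw [hvdef, div_lt_div_iff₀ (by linarith) two_pos]
    linarith
  have hu2 : u < Real.pi / 2 := huv.trans hv2
  have hav : a / r = 2 * v := by
    rw [hvdef]; field_simp
  have hau : a / R = 2 * u := by
    rw [hudef]; field_simp
  have hrv : 2 * r * v = a := by
    rw [hvdef]; field_simp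
  have hRu : 2 * R * u = a := by
    rw [hudef]; field_simp
  have hsv : 0 < Real.sin v := Real.sin_pos_of_pos_of_lt_pi hv0 (by linarith [Real.pi_pos])
  have hsu : 0 < Real.sin u := Real.sin_pos_of_pos_of_lt_pi hu0 (by linarith [Real.pi_pos])
  have hcosv : 2 - 2*Real.cos (a/r) = 4 * Real.sin v ^ 2 := by
    rw [hav]
    have := Real.sin_sq_eq_half_sub v
    linarith
  have hcosu : 2 - 2*Real.cos (a/R) = 4 * Real.sin u ^ 2 := by
    rw [hau]
    have := Real.sin_sq_eq_half_sub u
    linarith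
  rw [hcosv, hcosu]
  have hA : 0 < r^2*(4 * Real.sin v ^ 2) := by positivity
  have hB : 0 < R^2*(4 * Real.sin u ^ 2) := by positivity
  -- `r sin v < R sin u`
  have hsinc : u * Real.sin v < v * Real.sin u := aux_sinc_anti hu0 huv hv2
  have hkey : r * Real.sin v < R * Real.sin u := by
    have h := mul_lt_mul_of_pos_left hsinc ha0
    nlinarith [mul_pos hu0 hv0]
  have hAB : r^2*(4 * Real.sin v ^ 2) < R^2*(4 * Real.sin u ^ 2) := by
    nlinarith [mul_pos hr hsv]
  constructor
  · have := one_div_lt_one_div_of_lt hA hAB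
    linarith
  · -- upper bound
    have hsulev : Real.sin u < u := Real.sin_lt hu0
    have hBC : R^2*(4 * Real.sin u ^ 2) < R^2*(4 * u ^ 2) := by
      have hs2 : Real.sin u ^ 2 < u ^ 2 := by nlinarith
      exact mul_lt_mul_of_pos_left (by linarith) (pow_pos hR 2)
    have h1 : 1/(R^2*(4 * u ^ 2)) < 1/(R^2*(4 * Real.sin u ^ 2)) :=
      one_div_lt_one_div_of_lt hB hBC
    have hC : R^2*(4 * u ^ 2) = 4 * r^2 * v^2 := by
      have h2 : (2*R*u)^2 = (2*r*v)^2 := by rw [hRu, hrv]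
      linear_combination h2
    have hH := aux_H_lt hv0 hv2
    have hsplit : 1/(r^2*(4 * Real.sin v ^ 2)) - 1/(4 * r^2 * v^2)
        = (1/(4*r^2)) * (1 / Real.sin v ^ 2 - 1 / v ^ 2) := by
      field_simp
    have hrhs : (1/4 - 1/Real.pi^2) * (1/r^2)
        = (1/(4*r^2)) * (1 - 4 / Real.pi ^ 2) := by
      have hpi : Real.pi ≠ 0 := Real.pi_ne_zero
      field_simp
      try ring
      try exact Or.inl trivial
    have hmain : (1/(4*r^2)) * (1 / Real.sin v ^ 2 - 1 / v ^ 2)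
        < (1/(4*r^2)) * (1 - 4 / Real.pi ^ 2) := by
      apply mul_lt_mul_of_pos_left hH
      positivity
    rw [hC] at h1
    rw [hrhs]
    linarith [hmain, hsplit]
end

section
/- Let x : [0, πr] → ℝ³ be a C² unit-speed curve whose curvature satisfies |x''(u)| ≤ 1/r everywhere, for some r > 0. Then the function t ↦ |x(t) - x(0)| is strictly monotone increasing on (0, πr); equivalently, for 0 < t < πr, the derivative of t ↦ |x(t) - x(0)|² is positive. -/
open Real Set

set_option maxHeartbeats 1600000 in
lemma tangent_inner_ge_cos {E : Type*} [NormedAddCommGroup E] [InnerProductSpace ℝ E]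
    (r : ℝ) (hr : 0 < r) (T : ℝ → E) (hT : Differentiable ℝ T)
    (hUnit : ∀ w ∈ Set.Icc 0 (Real.pi * r), ‖T w‖ = 1)
    (hBound : ∀ w ∈ Set.Icc 0 (Real.pi * r), ‖deriv T w‖ ≤ 1/r)
    (hOrth : ∀ w ∈ Set.Icc 0 (Real.pi * r), (inner ℝ (T w) (deriv T w) : ℝ) = 0)
    (τ : ℝ) (hτ0 : 0 ≤ τ) (hτπ : τ < Real.pi * r) (u : ℝ) (hu : u ∈ Set.Icc 0 τ) :
    Real.cos ((τ - u)/r) ≤ (inner ℝ (T τ) (T u) : ℝ) := by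
  have hπr : 0 < Real.pi * r := mul_pos Real.pi_pos hr
  have hτI : τ ∈ Set.Icc 0 (Real.pi * r) := ⟨hτ0, hτπ.le⟩
  have hTc : Continuous T := hT.continuous
  set X := T τ with hX
  set h : ℝ → ℝ := fun w => (inner ℝ X (T w) : ℝ) with hh
  have hhc : Continuous h := continuous_const.inner hTc
  have hIccI : Set.Icc 0 τ ⊆ Set.Icc 0 (Real.pi * r) :=
    Set.Icc_subset_Icc le_rfl hτπ.le
  have hder : ∀ w, HasDerivAt h ((inner ℝ X (deriv T w) : ℝ)) w := by
    intro w
    have := HasDerivAt.inner ℝ (hasDerivAt_const w X) ((hT w).hasDerivAt)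
    simpa using this
  have hlip : ∀ a ∈ Set.Icc 0 (Real.pi * r), ∀ b ∈ Set.Icc 0 (Real.pi * r),
      ‖T b - T a‖ ≤ (1/r) * ‖b - a‖ := fun a ha b hb =>
    (convex_Icc _ _).norm_image_sub_le_of_norm_hasDerivWithin_le
      (fun w _ => (hT w).hasDerivAt.hasDerivWithinAt) hBound ha hb
  have hchord : ∀ w ∈ Set.Icc 0 τ, 1 - ((τ - w)/r)^2/2 ≤ h w := by
    intro w hw
    have hwI := hIccI hw
    have h1 : ‖T τ - T w‖ ≤ (τ - w)/r := by
      have := hlip w hwI τ hτI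
      rw [Real.norm_eq_abs, abs_of_nonneg (by linarith [hw.2])] at this
      calc ‖T τ - T w‖ ≤ 1/r * (τ - w) := this
        _ = (τ - w)/r := by ring
    have h2 : ‖T τ - T w‖ ^ 2 ≤ ((τ - w)/r) ^ 2 :=
      pow_le_pow_left₀ (norm_nonneg _) h1 2
    have h3 : ‖T τ - T w‖ ^ 2
        = ‖T τ‖ ^ 2 - 2 * (inner ℝ (T τ) (T w) : ℝ) + ‖T w‖ ^ 2 := norm_sub_sq_real _ _
    rw [hUnit τ hτI, hUnit w hwI] at h3
    have : (inner ℝ (T τ) (T w) : ℝ) = h w := rfl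
    nlinarith
  have hdbound : ∀ w ∈ Set.Icc 0 (Real.pi * r),
      |(inner ℝ X (deriv T w) : ℝ)| ≤ (1/r) * Real.sqrt (1 - (h w)^2) := by
    intro w hw
    have horth := hOrth w hw
    have he : (inner ℝ X (deriv T w) : ℝ) = inner ℝ (X - h w • T w) (deriv T w) := by
      rw [inner_sub_left, inner_smul_left]
      simp [horth]
    have hnz : ‖X - h w • T w‖ = Real.sqrt (1 - (h w)^2) := by
      rw [← Real.sqrt_sq (norm_nonneg (X - h w • T w))]
      congr 1
      have h4 : ‖X - h w • T w‖ ^ 2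
          = ‖X‖ ^ 2 - 2 * (inner ℝ X (h w • T w) : ℝ) + ‖h w • T w‖ ^ 2 := norm_sub_sq_real _ _
      have h5 : (inner ℝ X (T w) : ℝ) = h w := rfl
      rw [h4, inner_smul_right, norm_smul, hX, hUnit τ hτI, hUnit w hw, h5]
      simp [norm_eq_abs, mul_pow, sq_abs]
      ring
    rw [he]
    calc |(inner ℝ (X - h w • T w) (deriv T w) : ℝ)|
        ≤ ‖X - h w • T w‖ * ‖deriv T w‖ := abs_real_inner_le_norm _ _
      _ ≤ ‖X - h w • T w‖ * (1/r) := by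
          apply mul_le_mul_of_nonneg_left (hBound w hw) (norm_nonneg _)
      _ = (1/r) * Real.sqrt (1 - (h w)^2) := by rw [hnz]; ring
  rcases eq_or_lt_of_le hu.2 with heq | hlt
  · rw [heq]
    have h1 : (inner ℝ (T τ) (T τ) : ℝ) = 1 := by
      rw [real_inner_self_eq_norm_sq, hUnit τ hτI]; norm_num
    show Real.cos ((τ - τ)/r) ≤ (inner ℝ (T τ) (T τ) : ℝ)
    rw [h1, sub_self, zero_div, Real.cos_zero]
  set v := τ - u with hv
  have hv0 : 0 < v := by simp only [hv]; linarith
  have hvτ : v ≤ τ := by simp only [hv]; linarith [hu.1]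
  have hvπ : v < Real.pi * r := lt_of_le_of_lt hvτ hτπ
  set g : ℝ → ℝ := fun w => h (τ - w) with hg
  have hgc : Continuous g := hhc.comp (by fun_prop)
  have hgder : ∀ w, HasDerivAt g (-(inner ℝ X (deriv T (τ - w)) : ℝ)) w := by
    intro w
    have h1 : HasDerivAt (fun w : ℝ => τ - w) (-1) w := by
      simpa using (hasDerivAt_id w).const_sub τ
    have := (hder (τ - w)).comp w h1
    exact this.congr_deriv (by ring)
  have hgoal : g v = (inner ℝ (T τ) (T u) : ℝ) := by simp [hg, hh, hv, hX]
  rw [← hgoal]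
  have hlamb : ∀ l : ℝ, 1 < l → l < Real.pi * r / v → Real.cos (l * v / r) ≤ g v := by
    intro l hl1 hl2
    have hl0 : 0 < l := lt_trans one_pos hl1
    have hl2' : 0 < l^2 - 1 := by nlinarith
    set δ := min v (r * Real.sqrt (l^2 - 1) / l^2) with hδ
    have hsq : Real.sqrt (l^2 - 1) ^ 2 = l^2 - 1 := Real.sq_sqrt hl2'.le
    have hsqpos : 0 < Real.sqrt (l^2 - 1) := Real.sqrt_pos.mpr hl2'
    have hδ0 : 0 < δ :=
      lt_min hv0 (div_pos (mul_pos hr hsqpos) (by positivity))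
    have hδv : δ ≤ v := min_le_left _ _
    have hδ2 : δ * l^2 ≤ r * Real.sqrt (l^2 - 1) := by
      have := min_le_right v (r * Real.sqrt (l^2 - 1) / l^2)
      rw [le_div_iff₀ (by positivity)] at this
      exact this
    have hδsq : δ^2 * l^4 ≤ r^2 * (l^2 - 1) := by
      have h6 : (δ*l^2)*(δ*l^2) ≤ (r*Real.sqrt (l^2-1))*(r*Real.sqrt (l^2-1)) :=
        mul_le_mul hδ2 hδ2 (by positivity) (by positivity)
      nlinarith [h6, hsq]
    set b := min τ (Real.pi * r / l) with hb
    have hvb : v ≤ b := by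
      apply le_min hvτ
      rw [le_div_iff₀ hl0]
      rw [lt_div_iff₀ hv0] at hl2
      nlinarith
    have hbτ : b ≤ τ := min_le_left _ _
    set F : ℝ → ℝ := fun w => Real.cos (l * w / r) with hF
    set F' : ℝ → ℝ := fun w => -(l/r) * Real.sin (l * w / r) with hF'
    set G' : ℝ → ℝ := fun w => -(inner ℝ X (deriv T (τ - w)) : ℝ) with hG'
    have hFc : ContinuousOn F (Set.Icc δ b) := by
      apply Continuous.continuousOn
      exact Real.continuous_cos.comp (by fun_prop)
    have hFd : ∀ w ∈ Set.Ico δ b, HasDerivWithinAt F (F' w) (Set.Ici w) w := by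
      intro w _
      have h1 : HasDerivAt (fun w : ℝ => l * w / r) (l / r) w := by
        simpa using ((hasDerivAt_id w).const_mul l).div_const r
      have h2 := (Real.hasDerivAt_cos (l * w / r)).comp w h1
      refine HasDerivAt.hasDerivWithinAt ?_
      refine h2.congr_deriv ?_
      simp only [hF']
      ring
    have hGd : ∀ w ∈ Set.Ico δ b, HasDerivWithinAt g (G' w) (Set.Ici w) w := fun w _ =>
      (hgder w).hasDerivWithinAt
    have hinit : F δ ≤ g δ := by
      have hδτ : τ - δ ∈ Set.Icc 0 τ := ⟨by linarith [hδv, hvτ], by linarith [hδ0]⟩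
      have hc := hchord (τ - δ) hδτ
      have hδδ : τ - (τ - δ) = δ := by ring
      rw [hδδ] at hc
      have hδr : |l * δ / r| ≤ 1 := by
        rw [abs_of_nonneg (by positivity), div_le_one hr]
        nlinarith [hsq, sq_nonneg (Real.sqrt (l^2-1) - l), hδ2, hδ0.le]
      have hcb := Real.cos_bound hδr
      have habseq : |l * δ / r| ^ 4 = (l * δ / r)^4 := by
        rw [pow_abs, abs_of_nonneg (by positivity)]
      have h7 : l^4*δ^4*(5/96) + δ^2*r^2/2 ≤ l^2*δ^2*r^2/2 := by
        have h9 : δ^2*(δ^2*l^4) ≤ δ^2*(r^2*(l^2-1)) :=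
          mul_le_mul_of_nonneg_left hδsq (by positivity)
        have hY0 : (0:ℝ) ≤ δ^2*(r^2*(l^2-1)) := by positivity
        nlinarith [h9, hY0]
      have hq : (l*δ/r)^4 * (5/96) + (δ/r)^2/2 ≤ (l*δ/r)^2/2 := by
        have hr4 : (0:ℝ) < r^4 := by positivity
        have e1 : (l*δ/r)^4 * (5/96) + (δ/r)^2/2
            = (l^4*δ^4*(5/96) + δ^2*r^2/2)/r^4 := by field_simp
        have e2 : (l*δ/r)^2/2 = (l^2*δ^2*r^2/2)/r^4 := by field_simp
        rw [e1, e2]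
        gcongr
      have hfin : Real.cos (l*δ/r) ≤ 1 - (δ/r)^2/2 := by
        have h8 := (abs_le.mp hcb).2
        rw [habseq] at h8
        linarith [hq]
      calc F δ ≤ 1 - (δ/r)^2/2 := hfin
        _ ≤ h (τ - δ) := hc
        _ = g δ := rfl
    have hstrict : ∀ w ∈ Set.Ico δ b, F w = g w → F' w < G' w := by
      intro w hw hcontact
      have hw0 : 0 < w := lt_of_lt_of_le hδ0 hw.1
      have hwb : w < b := hw.2
      have hwτ : w ≤ τ := le_trans hwb.le hbτ
      have hwI : τ - w ∈ Set.Icc 0 (Real.pi * r) := ⟨by linarith, by linarith [hτπ.le]⟩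
      have hθ : 0 < l * w / r := by positivity
      have hθπ : l * w / r < Real.pi := by
        have h1 : w < Real.pi * r / l := lt_of_lt_of_le hwb (min_le_right _ _)
        rw [lt_div_iff₀ hl0] at h1
        rw [div_lt_iff₀ hr]
        nlinarith
      have hsin : 0 < Real.sin (l * w / r) := Real.sin_pos_of_pos_of_lt_pi hθ hθπ
      have hcw : h (τ - w) = Real.cos (l * w / r) := hcontact.symm
      have hbd := hdbound (τ - w) hwI
      rw [hcw] at hbd
      have hs : Real.sqrt (1 - Real.cos (l*w/r)^2) = Real.sin (l*w/r) := by
        rw [show 1 - Real.cos (l*w/r)^2 = Real.sin (l*w/r)^2 by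
          have := Real.sin_sq_add_cos_sq (l*w/r); linarith]
        exact Real.sqrt_sq hsin.le
      rw [hs] at hbd
      have h1 : -((1/r) * Real.sin (l*w/r)) ≤ G' w := by
        have := (abs_le.mp hbd).2
        simp only [hG']
        linarith
      have h2 : F' w < -((1/r) * Real.sin (l*w/r)) := by
        have h3 : (1/r) * Real.sin (l*w/r) < (l/r) * Real.sin (l*w/r) := by
          apply mul_lt_mul_of_pos_right _ hsin
          rw [div_lt_div_iff₀ hr hr]
          nlinarith
        simp only [hF']
        linarith
      exact lt_of_lt_of_le h2 h1
    have main := image_le_of_deriv_right_lt_deriv_boundary' hFc hFd hinit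
      hgc.continuousOn hGd hstrict
    exact main ⟨hδv, hvb⟩
  have htend : Filter.Tendsto (fun l : ℝ => Real.cos (l * v / r)) (nhdsWithin 1 (Set.Ioi 1))
      (nhds (Real.cos (v / r))) := by
    have h1 : Filter.Tendsto (fun l : ℝ => Real.cos (l * v / r)) (nhds 1)
        (nhds (Real.cos (1 * v / r))) := by
      apply Continuous.tendsto
      fun_prop
    rw [one_mul] at h1
    exact h1.mono_left nhdsWithin_le_nhds
  have hvr : (τ - u)/r = v/r := by rw [hv]
  rw [hvr]
  apply le_of_tendsto htend
  have hmem : Set.Ioo (1:ℝ) (Real.pi * r / v) ∈ nhdsWithin 1 (Set.Ioi 1) := by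
    apply Ioo_mem_nhdsGT_of_mem
    refine ⟨le_refl 1, ?_⟩
    rw [lt_div_iff₀ hv0]; linarith
  filter_upwards [hmem] with l hl
  exact hlamb l hl.1 hl.2

lemma inner_intervalIntegral_aux {E : Type*} [NormedAddCommGroup E] [InnerProductSpace ℝ E]
    [CompleteSpace E] (c : E) {f : ℝ → E} {a b : ℝ}
    (h : IntervalIntegrable f MeasureTheory.volume a b) :
    (inner ℝ c (∫ u in a..b, f u) : ℝ) = ∫ u in a..b, (inner ℝ c (f u) : ℝ) := by
  rw [intervalIntegral, intervalIntegral, inner_sub_right,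
    integral_inner h.1 c, integral_inner h.2 c]

set_option maxHeartbeats 1600000 in
/-- A unit-speed `C²` curve with curvature at most `1/r`: chord length from the
initial point is strictly increasing for arc-length up to `π r`. -/
theorem monotone_chord_length (r : ℝ) (hr : 0 < r)
    (x : ℝ → EuclideanSpace ℝ (Fin 3)) (hC2 : ContDiff ℝ 2 x)
    (hunit : ∀ t ∈ Set.Icc 0 (Real.pi * r), ‖deriv x t‖ = 1)
    (hcurv : ∀ u ∈ Set.Icc 0 (Real.pi * r), ‖deriv (deriv x) u‖ ≤ 1/r) :
    ∀ s t : ℝ, 0 < s → s < t → t ≤ Real.pi * r →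
      ‖x s - x 0‖ < ‖x t - x 0‖ := by
  intro s t hs hst htle
  have hπr : 0 < Real.pi * r := mul_pos Real.pi_pos hr
  have hd1 : Differentiable ℝ x := hC2.differentiable (by norm_num)
  have hC2' : ContDiff ℝ 1 (deriv x) := by
    have h21 : ContDiff ℝ ((1:ℕ∞) + 1) x := hC2.of_le (by norm_num)
    exact (contDiff_succ_iff_deriv.mp h21).2.2
  have hd2 : Differentiable ℝ (deriv x) := hC2'.differentiable one_ne_zero
  have hd2c : Continuous (deriv (deriv x)) := by
    have h10 : ContDiff ℝ ((0:ℕ∞) + 1) (deriv x) := hC2'.of_le (by norm_num)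
    exact ((contDiff_succ_iff_deriv.mp h10).2.2).continuous
  -- orthogonality of deriv x and deriv (deriv x) on [0, πr]
  have hOrth : ∀ w ∈ Set.Icc 0 (Real.pi * r),
      (inner ℝ (deriv x w) (deriv (deriv x) w) : ℝ) = 0 := by
    have hGc : Continuous (fun w => (inner ℝ (deriv x w) (deriv (deriv x) w) : ℝ)) :=
      (hd2.continuous).inner hd2c
    have hIoo : Set.EqOn (fun w => (inner ℝ (deriv x w) (deriv (deriv x) w) : ℝ)) 0
        (Set.Ioo 0 (Real.pi * r)) := by
      intro w hw
      have hF : ∀ w', HasDerivAt (fun w' => (inner ℝ (deriv x w') (deriv x w') : ℝ))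
          (2 * (inner ℝ (deriv x w') (deriv (deriv x) w') : ℝ)) w' := by
        intro w'
        have h1 := HasDerivAt.inner ℝ ((hd2 w').hasDerivAt) ((hd2 w').hasDerivAt)
        refine h1.congr_deriv ?_
        rw [real_inner_comm]
        ring
      have heq : (fun w' => (inner ℝ (deriv x w') (deriv x w') : ℝ)) =ᶠ[nhds w]
          (fun _ => (1:ℝ)) := by
        filter_upwards [isOpen_Ioo.mem_nhds hw] with y hy
        rw [real_inner_self_eq_norm_sq, hunit y ⟨hy.1.le, hy.2.le⟩]
        norm_num
      have h0 : HasDerivAt (fun w' => (inner ℝ (deriv x w') (deriv x w') : ℝ)) 0 w :=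
        (hasDerivAt_const w (1:ℝ)).congr_of_eventuallyEq heq
      have := (hF w).unique h0
      simp only [Pi.zero_apply]
      linarith
    have hclo := hIoo.closure hGc continuous_const
    rw [closure_Ioo (ne_of_lt hπr)] at hclo
    exact fun w hw => hclo hw
  -- key inner-product bound
  have hkey : ∀ τ, 0 ≤ τ → τ < Real.pi * r → ∀ u ∈ Set.Icc 0 τ,
      Real.cos ((τ - u)/r) ≤ (inner ℝ (deriv x τ) (deriv x u) : ℝ) := fun τ hτ0 hτπ u hu =>
    tangent_inner_ge_cos r hr (deriv x) hd2 hunit hcurv hOrth τ hτ0 hτπ u hu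
  -- FTC
  have hFTC : ∀ τ : ℝ, x τ - x 0 = ∫ u in (0:ℝ)..τ, deriv x u := fun τ =>
    (intervalIntegral.integral_deriv_eq_sub (fun u _ => hd1 u)
      (hd2.continuous.intervalIntegrable _ _)).symm
  -- squared distance
  set f : ℝ → ℝ := fun τ => (inner ℝ (x τ - x 0) (x τ - x 0) : ℝ) with hf
  have hfd : ∀ τ, HasDerivAt f (2 * (inner ℝ (deriv x τ) (x τ - x 0) : ℝ)) τ := by
    intro τ
    have h1 : HasDerivAt (fun τ => x τ - x 0) (deriv x τ) τ :=
      ((hd1 τ).hasDerivAt).sub_const _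
    have h2 := HasDerivAt.inner ℝ h1 h1
    refine h2.congr_deriv ?_
    rw [real_inner_comm]
    ring
  have hposint : ∀ τ ∈ Set.Ioo (0:ℝ) (Real.pi * r), 0 < deriv f τ := by
    intro τ hτ
    rw [(hfd τ).deriv]
    have hint1 : IntervalIntegrable (deriv x) MeasureTheory.volume 0 τ :=
      hd2.continuous.intervalIntegrable _ _
    have key : (inner ℝ (deriv x τ) (x τ - x 0) : ℝ)
        = ∫ u in (0:ℝ)..τ, (inner ℝ (deriv x τ) (deriv x u) : ℝ) := by
      rw [hFTC τ, inner_intervalIntegral_aux _ hint1]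
    have hcosint : ∫ u in (0:ℝ)..τ, Real.cos ((τ - u)/r) = r * Real.sin (τ/r) := by
      have hder : ∀ u ∈ Set.uIcc (0:ℝ) τ,
          HasDerivAt (fun u => -r * Real.sin ((τ - u)/r)) (Real.cos ((τ - u)/r)) u := by
        intro u _
        have h1 : HasDerivAt (fun u : ℝ => (τ - u)/r) (-1/r) u := by
          simpa using ((hasDerivAt_id u).const_sub τ).div_const r
        have h2 := (Real.hasDerivAt_sin ((τ - u)/r)).comp u h1
        have h3 := h2.const_mul (-r)
        refine h3.congr_deriv ?_
        field_simp
      rw [intervalIntegral.integral_eq_sub_of_hasDerivAt hder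
        (Continuous.intervalIntegrable (Real.continuous_cos.comp (by fun_prop)) _ _)]
      simp
    have hmono : ∫ u in (0:ℝ)..τ, Real.cos ((τ - u)/r)
        ≤ ∫ u in (0:ℝ)..τ, (inner ℝ (deriv x τ) (deriv x u) : ℝ) := by
      apply intervalIntegral.integral_mono_on hτ.1.le
      · exact Continuous.intervalIntegrable (Real.continuous_cos.comp (by fun_prop)) _ _
      · exact (continuous_const.inner hd2.continuous).intervalIntegrable _ _
      · exact fun u hu => hkey τ hτ.1.le hτ.2 u hu
    have hsin : 0 < r * Real.sin (τ/r) := by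
      apply mul_pos hr
      apply Real.sin_pos_of_pos_of_lt_pi (div_pos hτ.1 hr)
      rw [div_lt_iff₀ hr]
      linarith [hτ.2]
    rw [key]
    nlinarith [hcosint ▸ hmono]
  have hcont : ContinuousOn f (Set.Icc 0 (Real.pi * r)) :=
    fun τ _ => ((hfd τ).continuousAt).continuousWithinAt
  have hsm : StrictMonoOn f (Set.Icc 0 (Real.pi * r)) := by
    apply strictMonoOn_of_deriv_pos (convex_Icc _ _) hcont
    intro τ hτ
    rw [interior_Icc] at hτ
    exact hposint τ hτ
  have hfs : f s < f t :=
    hsm ⟨hs.le, (hst.trans_le htle).le⟩ ⟨(hs.trans hst).le, htle⟩ hst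
  simp only [hf, real_inner_self_eq_norm_sq] at hfs
  nlinarith [norm_nonneg (x s - x 0), norm_nonneg (x t - x 0)]
end

section
/- Let x : [0, πr] → ℝ³ be a C² unit-speed curve with curvature bounded by 1/r, and let 0 < t < πr. Then (x(t) - x(0)) · x'(t) ≥ r·sin(t/r) > 0. -/
open RealInnerProductSpace

lemma chord_comp_lemma (r t : ℝ) (hr : 0 < r) (ht : 0 < t) (htr : t < Real.pi * r)
    (k k' : ℝ → ℝ) (hk : ∀ σ, HasDerivAt k (k' σ) σ) (hk0 : k 0 = 1)
    (hbound : ∀ σ ∈ Set.Icc (0:ℝ) t, |k' σ| ≤ (1/r) * Real.sqrt (1 - (k σ)^2)) :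
    ∀ σ ∈ Set.Icc (0:ℝ) t, Real.cos (σ/r) ≤ k σ := by
  have hkc : Continuous k := by
    have : Differentiable ℝ k := fun σ => (hk σ).differentiableAt
    exact this.continuous
  have key : ∀ ε > 0, (1+ε)/r*t + ε < Real.pi →
      ∀ σ ∈ Set.Icc (0:ℝ) t, Real.cos ((1+ε)/r*σ + ε) < k σ := by
    intro ε hε hεπ
    by_contra hcon
    push_neg at hcon
    obtain ⟨σ₀, hσ₀, hσ₀le⟩ := hcon
    have hεπ' : ε < Real.pi := by
      have : 0 < (1+ε)/r*t := by positivity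
      linarith
    set z : ℝ → ℝ := fun σ => Real.cos ((1+ε)/r*σ + ε) with hz
    have hzc : Continuous z := by fun_prop
    have hzd : ∀ σ, HasDerivAt z (-Real.sin ((1+ε)/r*σ + ε) * ((1+ε)/r)) σ := by
      intro σ
      have h1 : HasDerivAt (fun σ : ℝ => (1+ε)/r*σ + ε) ((1+ε)/r) σ := by
        simpa using ((hasDerivAt_id σ).const_mul ((1+ε)/r)).add_const ε
      exact (Real.hasDerivAt_cos _).comp σ h1
    set S : Set ℝ := Set.Icc 0 t ∩ {σ | k σ ≤ z σ} with hS
    have hScl : IsClosed S := isClosed_Icc.inter (isClosed_le hkc hzc)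
    have hSne : S.Nonempty := ⟨σ₀, hσ₀, hσ₀le⟩
    have hSbd : BddBelow S := ⟨0, fun σ hσ => hσ.1.1⟩
    have hmem : sInf S ∈ S := hScl.csInf_mem hSne hSbd
    obtain ⟨σs, hσsdef⟩ : ∃ σs, σs = sInf S := ⟨_, rfl⟩
    rw [← hσsdef] at hmem
    have hσs0 : 0 < σs := by
      rcases hmem.1.1.lt_or_eq with h | h
      · exact h
      · exfalso
        have h0 : k 0 ≤ z 0 := by rw [h]; exact hmem.2
        have hz0 : z 0 < 1 := by
          have := Real.cos_lt_cos_of_nonneg_of_le_pi (le_refl 0) hεπ'.le hε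
          simpa [hz] using this
        rw [hk0] at h0; linarith
    have hlt : ∀ σ ∈ Set.Ico (0:ℝ) σs, z σ < k σ := by
      intro σ hσ
      by_contra hle
      push_neg at hle
      have hmem' : σ ∈ S := ⟨⟨hσ.1, le_trans hσ.2.le hmem.1.2⟩, hle⟩
      have := csInf_le hSbd hmem'
      rw [← hσsdef] at this
      exact absurd this (not_le.mpr hσ.2)
    have heq : k σs = z σs := by
      refine le_antisymm hmem.2 ?_
      have hten : Filter.Tendsto (fun σ => k σ - z σ) (nhdsWithin σs (Set.Iio σs))
          (nhds (k σs - z σs)) :=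
        ((hkc.sub hzc).tendsto σs).mono_left nhdsWithin_le_nhds
      have hev : ∀ᶠ σ in nhdsWithin σs (Set.Iio σs), 0 ≤ k σ - z σ := by
        filter_upwards [Ico_mem_nhdsLT_of_mem ⟨hσs0, le_refl σs⟩] with σ hσ
        exact sub_nonneg.mpr (hlt σ hσ).le
      have := ge_of_tendsto hten hev
      linarith
    obtain ⟨θ, hθ⟩ : ∃ θ, θ = (1+ε)/r*σs + ε := ⟨_, rfl⟩
    obtain ⟨w', hw'⟩ : ∃ w', w' = k' σs - (-Real.sin θ * ((1+ε)/r)) := ⟨_, rfl⟩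
    have hwd : HasDerivAt (fun σ => k σ - z σ) w' σs := by
      rw [hw', hθ]; exact (hk σs).sub (hzd σs)
    have hwle : w' ≤ 0 := by
      have hslope := hasDerivAt_iff_tendsto_slope.mp hwd
      have hslope' : Filter.Tendsto (slope (fun σ => k σ - z σ) σs)
          (nhdsWithin σs (Set.Iio σs)) (nhds w') :=
        hslope.mono_left (nhdsWithin_mono _ fun y hy => ne_of_lt hy)
      refine le_of_tendsto hslope' ?_
      filter_upwards [Ico_mem_nhdsLT_of_mem ⟨hσs0, le_refl σs⟩,
        self_mem_nhdsWithin] with σ hσ hσ'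
      have hnum : 0 ≤ k σ - z σ := sub_nonneg.mpr (hlt σ hσ).le
      have hden : σ - σs < 0 := sub_neg.mpr hσ'
      have hzero : k σs - z σs = 0 := by rw [heq]; ring
      rw [slope_def_field, div_eq_mul_inv]
      apply mul_nonpos_of_nonneg_of_nonpos
      · rw [hzero]; linarith
      · exact (inv_nonpos).mpr hden.le
    have hθpos : 0 < θ := by
      have h1 : 0 ≤ (1+ε)/r*σs := by positivity
      rw [hθ]; linarith
    have hθlt : θ < Real.pi := by
      have h1 : (1+ε)/r*σs ≤ (1+ε)/r*t :=
        mul_le_mul_of_nonneg_left hmem.1.2 (by positivity)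
      rw [hθ]; linarith
    have hsin : 0 < Real.sin θ := Real.sin_pos_of_pos_of_lt_pi hθpos hθlt
    have hsqrt : Real.sqrt (1 - (k σs)^2) = Real.sin θ := by
      rw [heq]
      show Real.sqrt (1 - (Real.cos ((1+ε)/r*σs + ε))^2) = _
      rw [← hθ, show (1 : ℝ) - Real.cos θ ^ 2 = Real.sin θ ^ 2 by
        have := Real.sin_sq_add_cos_sq θ; linarith]
      exact Real.sqrt_sq hsin.le
    have hb := hbound σs hmem.1
    rw [hsqrt] at hb
    have hk'ge : -(1/r * Real.sin θ) ≤ k' σs := neg_le_of_abs_le hb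
    have hfin : 0 < w' := by
      have h2 : w' = k' σs + Real.sin θ * ((1+ε)/r) := by rw [hw']; ring
      have h3 : Real.sin θ * ((1+ε)/r) - 1/r * Real.sin θ = Real.sin θ * (ε/r) := by
        ring
      have h4 : 0 < Real.sin θ * (ε/r) := by positivity
      linarith
    linarith
  -- limit ε → 0⁺
  intro σ hσ
  have hten : Filter.Tendsto (fun ε : ℝ => Real.cos ((1+ε)/r*σ + ε))
      (nhdsWithin 0 (Set.Ioi 0)) (nhds (Real.cos (σ/r))) := by
    have hc : Continuous (fun ε : ℝ => Real.cos ((1+ε)/r*σ + ε)) := by fun_prop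
    have h0 : (1+(0:ℝ))/r*σ + 0 = σ/r := by ring
    have := (hc.tendsto 0).mono_left (nhdsWithin_le_nhds (s := Set.Ioi (0:ℝ)))
    rw [h0] at this
    exact this
  refine le_of_tendsto hten ?_
  have hopen : ∀ᶠ ε in nhdsWithin (0:ℝ) (Set.Ioi 0), (1+ε)/r*t + ε < Real.pi := by
    have hc : Continuous (fun ε : ℝ => (1+ε)/r*t + ε) := by fun_prop
    have h0 : (1+(0:ℝ))/r*t + 0 < Real.pi := by
      rw [show (1+(0:ℝ))/r*t + 0 = t/r by ring, div_lt_iff₀ hr]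
      exact htr
    have hev : ∀ᶠ ε in nhds (0:ℝ), (1+ε)/r*t + ε < Real.pi :=
      (hc.tendsto 0).eventually_lt_const h0
    exact hev.filter_mono nhdsWithin_le_nhds
  filter_upwards [hopen, self_mem_nhdsWithin] with ε hεπ hε
  exact (key ε hε hεπ σ hσ).le

theorem chord_tangent_inner_pos (r : ℝ) (hr : 0 < r)
    (x : ℝ → EuclideanSpace ℝ (Fin 3)) (hC2 : ContDiff ℝ 2 x)
    (hunit : ∀ t ∈ Set.Icc 0 (Real.pi * r), ‖deriv x t‖ = 1)
    (hcurv : ∀ u ∈ Set.Icc 0 (Real.pi * r), ‖deriv (deriv x) u‖ ≤ 1/r)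
    (t : ℝ) (ht0 : 0 < t) (ht : t < Real.pi * r) :
    r * Real.sin (t/r) ≤ ⟪x t - x 0, deriv x t⟫ ∧ 0 < r * Real.sin (t/r) := by
  have hπr : 0 < Real.pi * r := lt_trans ht0 ht
  have hd1 : Differentiable ℝ x := hC2.differentiable (by norm_num)
  have hC1d : ContDiff ℝ 1 (deriv x) := ((contDiff_succ_iff_deriv (n := 1)).mp hC2).2.2
  have hd2 : Differentiable ℝ (deriv x) := hC1d.differentiable (by norm_num)
  have hc2 : Continuous (deriv (deriv x)) :=
    ((contDiff_succ_iff_deriv (n := 0)).mp hC1d).2.2.continuous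
  have hc1 : Continuous (deriv x) := hd2.continuous
  -- perpendicularity of x'' and x' on [0, πr]
  have hperp : ∀ s ∈ Set.Icc 0 (Real.pi * r), ⟪deriv (deriv x) s, deriv x s⟫ = 0 := by
    have hqd : ∀ s : ℝ, HasDerivAt (fun u => (⟪deriv x u, deriv x u⟫ : ℝ))
        (2 * ⟪deriv (deriv x) s, deriv x s⟫) s := by
      intro s
      have h0 := ((hd2 s).hasDerivAt).inner ℝ ((hd2 s).hasDerivAt)
      refine h0.congr_deriv ?_
      have := real_inner_comm (deriv (deriv x) s) (deriv x s)
      linarith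
    have hIoo : ∀ s ∈ Set.Ioo 0 (Real.pi * r), (⟪deriv (deriv x) s, deriv x s⟫ : ℝ) = 0 := by
      intro s hs
      have hconst : (fun u => (⟪deriv x u, deriv x u⟫ : ℝ)) =ᶠ[nhds s] (fun _ => (1:ℝ)) := by
        filter_upwards [Ioo_mem_nhds hs.1 hs.2] with u hu
        have := hunit u (Set.Ioo_subset_Icc_self hu)
        rw [real_inner_self_eq_norm_sq, this]; norm_num
      have h1 : HasDerivAt (fun _ : ℝ => (1:ℝ)) (2 * ⟪deriv (deriv x) s, deriv x s⟫) s :=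
        (hqd s).congr_of_eventuallyEq hconst.symm
      have h2 := h1.unique (hasDerivAt_const s 1)
      linarith
    have hcont : Continuous (fun s => (⟪deriv (deriv x) s, deriv x s⟫ : ℝ)) :=
      hc2.inner hc1
    have hclos : Set.EqOn (fun s => (⟪deriv (deriv x) s, deriv x s⟫ : ℝ)) (fun _ => (0:ℝ))
        (closure (Set.Ioo 0 (Real.pi * r))) :=
      Set.EqOn.closure (fun s hs => hIoo s hs) hcont continuous_const
    intro s hs
    rw [closure_Ioo (ne_of_lt hπr)] at hclos
    exact hclos hs
  -- h and its derivative
  set h : ℝ → ℝ := fun s => ⟪deriv x s, deriv x t⟫ with hhdef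
  have hhd : ∀ s, HasDerivAt h (⟪deriv (deriv x) s, deriv x t⟫ : ℝ) s := by
    intro s
    have h0 := ((hd2 s).hasDerivAt).inner ℝ (hasDerivAt_const s (deriv x t))
    refine h0.congr_deriv ?_
    rw [inner_zero_right]
    ring
  have htmem : t ∈ Set.Icc 0 (Real.pi * r) := ⟨ht0.le, ht.le⟩
  have hsub : Set.Icc (0:ℝ) t ⊆ Set.Icc 0 (Real.pi * r) := Set.Icc_subset_Icc (le_refl 0) ht.le
  have hht1 : h t = 1 := by
    rw [hhdef]
    show (⟪deriv x t, deriv x t⟫ : ℝ) = 1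
    rw [real_inner_self_eq_norm_sq, hunit t htmem]; norm_num
  -- bound on |h'|
  have hhb : ∀ s ∈ Set.Icc (0:ℝ) t, |(⟪deriv (deriv x) s, deriv x t⟫ : ℝ)| ≤
      (1/r) * Real.sqrt (1 - (h s)^2) := by
    intro s hs
    have hsI := hsub hs
    set v : EuclideanSpace ℝ (Fin 3) := deriv x t - h s • deriv x s with hvdef
    have hsplit : (⟪deriv (deriv x) s, deriv x t⟫ : ℝ) = ⟪deriv (deriv x) s, v⟫ := by
      rw [hvdef, inner_sub_right, real_inner_smul_right, hperp s hsI]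
      ring
    have hvv : (⟪v, v⟫ : ℝ) = 1 - (h s)^2 := by
      have e1 : (⟪deriv x t, deriv x t⟫ : ℝ) = 1 := by
        rw [real_inner_self_eq_norm_sq, hunit t htmem]; norm_num
      have e2 : (⟪deriv x s, deriv x s⟫ : ℝ) = 1 := by
        rw [real_inner_self_eq_norm_sq, hunit s hsI]; norm_num
      have e3 : (⟪deriv x s, deriv x t⟫ : ℝ) = h s := rfl
      have e4 : (⟪deriv x t, deriv x s⟫ : ℝ) = h s := by
        rw [real_inner_comm]
      rw [hvdef]
      simp only [inner_sub_left, inner_sub_right, real_inner_smul_left,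
        real_inner_smul_right, e1, e2, e3, e4]
      ring
    have hnv : ‖v‖ = Real.sqrt (1 - (h s)^2) := by
      have h1 : (1 : ℝ) - (h s)^2 = ‖v‖^2 := by
        rw [← hvv, real_inner_self_eq_norm_sq]
      rw [h1, Real.sqrt_sq (norm_nonneg v)]
    rw [hsplit]
    calc |(⟪deriv (deriv x) s, v⟫ : ℝ)| ≤ ‖deriv (deriv x) s‖ * ‖v‖ :=
          abs_real_inner_le_norm _ _
      _ ≤ (1/r) * ‖v‖ := mul_le_mul_of_nonneg_right (hcurv s hsI) (norm_nonneg v)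
      _ = (1/r) * Real.sqrt (1 - (h s)^2) := by rw [hnv]
  -- apply comparison to k σ = h (t - σ)
  have hcos : ∀ s ∈ Set.Icc (0:ℝ) t, Real.cos ((t - s)/r) ≤ h s := by
    have hkd : ∀ σ : ℝ, HasDerivAt (fun σ => h (t - σ))
        (-(⟪deriv (deriv x) (t - σ), deriv x t⟫ : ℝ)) σ := by
      intro σ
      have haff : HasDerivAt (fun σ : ℝ => t - σ) (-1) σ := by
        exact (hasDerivAt_id' σ).const_sub t
      have h0 := (hhd (t - σ)).comp σ haff
      refine h0.congr_deriv ?_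
      ring
    have hk0 : h (t - 0) = 1 := by rw [sub_zero]; exact hht1
    have hkb : ∀ σ ∈ Set.Icc (0:ℝ) t,
        |(fun σ => -(⟪deriv (deriv x) (t - σ), deriv x t⟫ : ℝ)) σ|
        ≤ (1/r) * Real.sqrt (1 - (h (t - σ))^2) := by
      intro σ hσ
      have hts : t - σ ∈ Set.Icc (0:ℝ) t := ⟨by linarith [hσ.2], by linarith [hσ.1]⟩
      simpa [abs_neg] using hhb (t - σ) hts
    have hcomp := chord_comp_lemma r t hr ht0 ht (fun σ => h (t - σ)) _ hkd hk0 hkb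
    intro s hs
    have hσ : t - s ∈ Set.Icc (0:ℝ) t := ⟨by linarith [hs.2], by linarith [hs.1]⟩
    have := hcomp (t - s) hσ
    simpa using this
  -- integrate
  have hint : (⟪x t - x 0, deriv x t⟫ : ℝ) = ∫ s in (0:ℝ)..t, h s := by
    have hg : ∀ s ∈ Set.uIcc (0:ℝ) t, HasDerivAt (fun u => (⟪x u, deriv x t⟫ : ℝ)) (h s) s := by
      intro s _
      have h0 := ((hd1 s).hasDerivAt).inner ℝ (hasDerivAt_const s (deriv x t))
      refine h0.congr_deriv ?_
      rw [inner_zero_right]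
      ring
    have hcont : IntervalIntegrable h MeasureTheory.volume 0 t :=
      (hc1.inner continuous_const).intervalIntegrable 0 t
    have hFTC := intervalIntegral.integral_eq_sub_of_hasDerivAt (fun s hs => hg s hs) hcont
    rw [hFTC, inner_sub_left]
  have hintcos : (∫ s in (0:ℝ)..t, Real.cos ((t - s)/r)) = r * Real.sin (t/r) := by
    have hF : ∀ s ∈ Set.uIcc (0:ℝ) t, HasDerivAt (fun u => -(r * Real.sin ((t - u)/r)))
        (Real.cos ((t - s)/r)) s := by
      intro s _
      have haff : HasDerivAt (fun u : ℝ => (t - u)/r) (-(1/r)) s := by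
        have h0 := ((hasDerivAt_id' s).const_sub t).mul_const (1/r)
        have e : (fun u : ℝ => (t - u) * (1/r)) = (fun u : ℝ => (t - u)/r) := by
          funext u; ring
        rw [e] at h0
        refine h0.congr_deriv ?_; ring
      have hsin := (Real.hasDerivAt_sin ((t - s)/r)).comp s haff
      have h1 := (hsin.const_mul r).neg
      refine h1.congr_deriv ?_
      field_simp
    have hcont : IntervalIntegrable (fun s => Real.cos ((t - s)/r)) MeasureTheory.volume 0 t :=
      (by fun_prop : Continuous fun s : ℝ => Real.cos ((t - s)/r)).intervalIntegrable 0 t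
    have hFTC := intervalIntegral.integral_eq_sub_of_hasDerivAt hF hcont
    rw [hFTC]
    simp
  constructor
  · rw [hint, ← hintcos]
    apply intervalIntegral.integral_mono_on ht0.le
    · exact (by fun_prop : Continuous fun s : ℝ => Real.cos ((t - s)/r)).intervalIntegrable 0 t
    · exact (hc1.inner continuous_const).intervalIntegrable 0 t
    · exact hcos
  · apply mul_pos hr
    apply Real.sin_pos_of_pos_of_lt_pi (by positivity)
    rw [div_lt_iff₀ hr]
    exact ht
end

section
/- Let x : [0, π] → ℝ³ be a C² unit-speed curve with |x''| ≤ 1, and let 0 ≤ a < b < c < d ≤ π. Then the minimum Euclidean distance between the line segments [x(a), x(b)] and [x(c), x(d)] equals |x(c) - x(b)|. -/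
open Real Set intervalIntegral RealInnerProductSpace

private abbrev E3 := EuclideanSpace ℝ (Fin 3)

private lemma trig_key {A B : ℝ} (hA : 0 ≤ A) (hB : 0 ≤ B) (hAB : A + B ≤ π) :
    0 ≤ Real.cos A + Real.cos B - Real.cos (A + B) - 1 := by
  have e1 := Real.cos_sq (A/2)
  have e2 := Real.cos_sq (B/2)
  have e3 := Real.cos_sq ((A+B)/2)
  rw [show 2*(A/2) = A by ring] at e1
  rw [show 2*(B/2) = B by ring] at e2
  rw [show 2*((A+B)/2) = A+B by ring] at e3
  have e4 : Real.cos ((A+B)/2) = Real.cos (A/2) * Real.cos (B/2)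
      - Real.sin (A/2) * Real.sin (B/2) := by
    rw [show (A+B)/2 = A/2 + B/2 by ring, Real.cos_add]
  have sa : 0 ≤ Real.sin (A/2) :=
    Real.sin_nonneg_of_nonneg_of_le_pi (by linarith) (by nlinarith [Real.pi_pos])
  have sb : 0 ≤ Real.sin (B/2) :=
    Real.sin_nonneg_of_nonneg_of_le_pi (by linarith) (by nlinarith [Real.pi_pos])
  have cab : 0 ≤ Real.cos ((A+B)/2) :=
    Real.cos_nonneg_of_mem_Icc ⟨by nlinarith [Real.pi_pos], by linarith⟩
  have pa := Real.sin_sq_add_cos_sq (A/2)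
  have pb := Real.sin_sq_add_cos_sq (B/2)
  have key : Real.cos A + Real.cos B - Real.cos (A+B) - 1
      = 4 * Real.sin (A/2) * Real.sin (B/2) * Real.cos ((A+B)/2) := by
    have hA' : Real.cos A = 2*Real.cos (A/2)^2 - 1 := by linarith
    have hB' : Real.cos B = 2*Real.cos (B/2)^2 - 1 := by linarith
    have hAB' : Real.cos (A+B) = 2*Real.cos ((A+B)/2)^2 - 1 := by linarith
    rw [hA', hB', hAB', e4]
    linear_combination (2*Real.sin (B/2)^2) * pa + (2 - 2*Real.cos (A/2)^2) * pb
  rw [key]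
  positivity

private lemma cos_lip (a b : ℝ) : |Real.cos a - Real.cos b| ≤ |a - b| := by
  rw [Real.cos_sub_cos]
  have h1 : |Real.sin ((a+b)/2)| ≤ 1 := Real.abs_sin_le_one _
  have h2 : |Real.sin ((a-b)/2)| ≤ |(a-b)/2| := Real.abs_sin_le_abs
  have h3 : |(a-b)/2| = |a-b|/2 := by rw [abs_div, abs_two]
  calc |(-2) * Real.sin ((a+b)/2) * Real.sin ((a-b)/2)|
      = 2 * (|Real.sin ((a+b)/2)| * |Real.sin ((a-b)/2)|) := by
        rw [abs_mul, abs_mul]; norm_num; ring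
    _ ≤ 2 * (1 * (|a-b|/2)) := by
        apply mul_le_mul_of_nonneg_left _ (by norm_num)
        exact mul_le_mul h1 (h3 ▸ h2) (abs_nonneg _) zero_le_one
    _ = |a - b| := by ring

private lemma y_lip (y : ℝ → E3) (hy : Differentiable ℝ y)
    (hspeed : ∀ t ∈ Set.Icc 0 π, ‖deriv y t‖ ≤ 1)
    {p q : ℝ} (hp : p ∈ Set.Icc 0 π) (hq : q ∈ Set.Icc 0 π) :
    ‖y p - y q‖ ≤ |p - q| := by
  have := Convex.norm_image_sub_le_of_norm_deriv_le (f := y) (s := Set.Icc 0 π)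
    (fun z _ => hy z) hspeed (convex_Icc 0 π) hq hp
  simpa [Real.norm_eq_abs] using this

private lemma chord_lb (y : ℝ → E3) (hy : Differentiable ℝ y)
    (hnorm : ∀ t ∈ Set.Icc 0 π, ‖y t‖ = 1)
    (hspeed : ∀ t ∈ Set.Icc 0 π, ‖deriv y t‖ ≤ 1)
    {p q : ℝ} (hp : p ∈ Set.Icc 0 π) (hq : q ∈ Set.Icc 0 π) :
    1 - (p - q)^2/2 ≤ ⟪y p, y q⟫ := by
  have hn : ‖y p - y q‖^2 = ‖y p‖^2 - 2 * ⟪y p, y q⟫ + ‖y q‖^2 := norm_sub_sq_real _ _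
  have h1' : ‖y p‖^2 = 1 := by rw [hnorm p hp]; norm_num
  have h2' : ‖y q‖^2 = 1 := by rw [hnorm q hq]; norm_num
  have hl := y_lip y hy hspeed hp hq
  have hl2 : ‖y p - y q‖^2 ≤ (p - q)^2 := by
    have := pow_le_pow_left₀ (norm_nonneg _) hl 2
    simpa [sq_abs] using this
  linarith

private lemma orth_tangent (y : ℝ → E3) (hy : Differentiable ℝ y)
    (hy' : Continuous (deriv y))
    (hnorm : ∀ t ∈ Set.Icc 0 π, ‖y t‖ = 1)
    {p : ℝ} (hp : p ∈ Set.Icc 0 π) : ⟪deriv y p, y p⟫ = 0 := by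
  have hcont : Continuous fun r => ⟪deriv y r, y r⟫ :=
    Continuous.inner (𝕜 := ℝ) hy' hy.continuous
  have hIoo : Set.EqOn (fun r => ⟪deriv y r, y r⟫) (fun _ => (0:ℝ)) (Set.Ioo 0 π) := by
    intro q hq
    have hev : (fun r => ⟪y r, y r⟫) =ᶠ[nhds q] fun _ => (1:ℝ) := by
      filter_upwards [isOpen_Ioo.mem_nhds hq] with r hr
      rw [real_inner_self_eq_norm_sq, hnorm r (Set.Ioo_subset_Icc_self hr)]; norm_num
    have hd : HasDerivAt (fun r => ⟪y r, y r⟫) (⟪y q, deriv y q⟫ + ⟪deriv y q, y q⟫) q :=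
      HasDerivAt.inner ℝ (hy q).hasDerivAt (hy q).hasDerivAt
    have h0 : deriv (fun r => ⟪y r, y r⟫) q = 0 := by
      rw [Filter.EventuallyEq.deriv_eq hev]; exact deriv_const q 1
    have hval := hd.deriv
    rw [h0] at hval
    have hcomm : ⟪y q, deriv y q⟫ = ⟪deriv y q, y q⟫ := real_inner_comm _ _
    show ⟪deriv y q, y q⟫ = 0
    linarith [hcomm ▸ hval]
  have hclos : Set.EqOn (fun r => ⟪deriv y r, y r⟫) (fun _ => (0:ℝ))
      (closure (Set.Ioo 0 π)) := hIoo.closure hcont continuous_const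
  have : p ∈ closure (Set.Ioo 0 π) := by
    rw [closure_Ioo Real.pi_ne_zero.symm]; exact hp
  exact hclos this

private lemma deriv_inner_bound (y : ℝ → E3) (hy : Differentiable ℝ y)
    (hy' : Continuous (deriv y))
    (hnorm : ∀ t ∈ Set.Icc 0 π, ‖y t‖ = 1)
    (hspeed : ∀ t ∈ Set.Icc 0 π, ‖deriv y t‖ ≤ 1)
    {p : ℝ} (hp : p ∈ Set.Icc 0 π) (c : E3) (hc : ‖c‖ = 1) :
    |⟪deriv y p, c⟫| ≤ Real.sqrt (1 - ⟪y p, c⟫^2) := by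
  set f : ℝ := ⟪y p, c⟫ with hf
  have horth := orth_tangent y hy hy' hnorm hp
  have hyp1 : ‖y p‖ = 1 := hnorm p hp
  have key : ⟪deriv y p, c⟫ = ⟪deriv y p, c - f • y p⟫ := by
    rw [inner_sub_right, real_inner_smul_right, horth, mul_zero, sub_zero]
  have hnc2 : ‖c - f • y p‖ ^ 2 = 1 - f ^ 2 := by
    have h1 : ‖c‖ ^ 2 = 1 := by rw [hc]; norm_num
    have h2 : ‖y p‖ ^ 2 = 1 := by rw [hyp1]; norm_num
    have hns := norm_sub_sq_real c (f • y p)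
    rw [real_inner_smul_right, real_inner_comm, norm_smul] at hns
    rw [hns, h1, ← hf]
    rw [Real.norm_eq_abs, mul_pow, sq_abs, h2]
    ring
  have hncn : ‖c - f • y p‖ = Real.sqrt (1 - f^2) := by
    rw [← hnc2, Real.sqrt_sq (norm_nonneg _)]
  calc |⟪deriv y p, c⟫| = |⟪deriv y p, c - f • y p⟫| := by rw [key]
    _ ≤ ‖deriv y p‖ * ‖c - f • y p‖ := abs_real_inner_le_norm _ _
    _ ≤ 1 * Real.sqrt (1 - f^2) := by
        rw [hncn]
        exact mul_le_mul_of_nonneg_right (hspeed p hp) (Real.sqrt_nonneg _)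
    _ = Real.sqrt (1 - f^2) := one_mul _

set_option maxHeartbeats 1000000 in
private lemma tangent_aux (y : ℝ → E3) (hy : Differentiable ℝ y)
    (hy' : Continuous (deriv y))
    (hnorm : ∀ t ∈ Set.Icc 0 π, ‖y t‖ = 1)
    (hspeed : ∀ t ∈ Set.Icc 0 π, ‖deriv y t‖ ≤ 1)
    {w v : ℝ} (hw0 : 0 ≤ w) (hwv : w < v) (hvπ : v ≤ π) (hgap : v - w < π)
    {ε : ℝ} (hεpos : 0 < ε) (hC : (1 + ε) * (v - w) < π) :
    Real.cos ((1 + ε) * (v - w)) ≤ ⟪y v, y w⟫ := by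
  have hvw : 0 < v - w := by linarith
  have hw_mem : w ∈ Set.Icc 0 π := ⟨hw0, by linarith⟩
  have hv_mem : v ∈ Set.Icc 0 π := ⟨by linarith, hvπ⟩
  have hywnorm : ‖y w‖ = 1 := hnorm w hw_mem
  have h1ε : (0:ℝ) < 1 + ε := by linarith
  set C := (1 + ε) * (v - w) with hCdef
  clear_value C
  have hCpos : 0 < C := by rw [hCdef]; positivity
  -- radius below which touching is impossible
  set r0 : ℝ := min (1/(1+ε)) (Real.sqrt ((24/5) * (ε*(2+ε)) / (1+ε)^4)) with hr0def
  clear_value r0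
  have hr0pos : 0 < r0 := by
    rw [hr0def]
    exact lt_min (by positivity) (Real.sqrt_pos.mpr (by positivity))
  -- positive lower bound for sin on the touching range
  obtain ⟨m, hmpos, hm⟩ : ∃ m, 0 < m ∧ ∀ θ ∈ Set.Icc ((1+ε)*r0) C, m ≤ Real.sin θ := by
    rcases le_or_gt ((1+ε)*r0) C with h | h
    · obtain ⟨θ0, hθ0mem, hθ0min⟩ :=
        isCompact_Icc.exists_isMinOn (Set.nonempty_Icc.mpr h)
          Real.continuous_sin.continuousOn
      refine ⟨Real.sin θ0, Real.sin_pos_of_pos_of_lt_pi ?_ ?_, fun θ hθ => hθ0min hθ⟩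
      · have := hθ0mem.1; nlinarith
      · exact lt_of_le_of_lt hθ0mem.2 hC
    · exact ⟨1, one_pos, fun θ hθ => absurd (hθ.1.trans hθ.2) (not_le.mpr h)⟩
  set η0 : ℝ := min 1 (ε*(2+ε) * m^2 / 2) with hη0def
  clear_value η0
  have hη0pos : 0 < η0 := by
    rw [hη0def]; exact lt_min one_pos (by positivity)
  -- fencing for each small η
  have hη : ∀ η, 0 < η → η < η0 → Real.cos C - η ≤ ⟪y v, y w⟫ := by
    intro η hηpos hηlt
    have hfcont : ContinuousOn (fun z => -⟪y z, y w⟫) (Set.Icc w v) :=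
      ((Continuous.inner (𝕜:=ℝ) hy.continuous continuous_const).neg).continuousOn
    have hf' : ∀ z ∈ Set.Ico w v,
        HasDerivWithinAt (fun z => -⟪y z, y w⟫) (-⟪deriv y z, y w⟫) (Set.Ici z) z := by
      intro z _
      have h1 : HasDerivAt (fun z => ⟪y z, y w⟫) (⟪deriv y z, y w⟫) z := by
        simpa using HasDerivAt.inner ℝ (hy z).hasDerivAt (hasDerivAt_const z (y w))
      exact (h1.neg).hasDerivWithinAt
    have hBd : ∀ z, HasDerivAt (fun z => -Real.cos ((1+ε)*(z-w)) + η)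
        ((1+ε) * Real.sin ((1+ε)*(z-w))) z := by
      intro z
      have h1 : HasDerivAt (fun z : ℝ => (1+ε)*(z-w)) (1+ε) z := by
        simpa using ((hasDerivAt_id z).sub_const w).const_mul (1+ε)
      have h2 := (Real.hasDerivAt_cos ((1+ε)*(z-w))).comp z h1
      have h3 := h2.neg.add_const η
      exact h3.congr_deriv (by ring)
    have ha : -⟪y w, y w⟫ ≤ -Real.cos ((1+ε)*(w-w)) + η := by
      have h1 : ⟪y w, y w⟫ = 1 := by
        rw [real_inner_self_eq_norm_sq, hywnorm]; norm_num
      rw [h1, sub_self, mul_zero, Real.cos_zero]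
      linarith
    have bound : ∀ z ∈ Set.Ico w v,
        (fun z => -⟪y z, y w⟫) z = (fun z => -Real.cos ((1+ε)*(z-w)) + η) z →
        -⟪deriv y z, y w⟫ < (1+ε) * Real.sin ((1+ε)*(z-w)) := by
      intro z hz htouch
      simp only at htouch
      have hz_mem : z ∈ Set.Icc 0 π := ⟨by linarith [hz.1], by linarith [hz.2]⟩
      set r := z - w with hrdef
      clear_value r
      have hrnn : 0 ≤ r := by rw [hrdef]; linarith [hz.1]
      have hrv : r < v - w := by rw [hrdef]; linarith [hz.2]
      set θ := (1+ε)*r with hθdef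
      clear_value θ
      have hθnn : 0 ≤ θ := by rw [hθdef]; positivity
      have hf_eq : ⟪y z, y w⟫ = Real.cos θ - η := by linarith [htouch]
      have hchord : 1 - r^2/2 ≤ ⟪y z, y w⟫ := by
        have := chord_lb y hy hnorm hspeed hz_mem hw_mem
        simpa [← hrdef] using this
      -- step A : touching point is not too close to w
      have hrr0 : r0 < r := by
        by_contra hle
        push_neg at hle
        rw [hr0def] at hle
        have h1 : r ≤ 1/(1+ε) := le_trans hle (min_le_left _ _)
        have h2 : r^2 ≤ (24/5) * (ε*(2+ε)) / (1+ε)^4 := by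
          have hle2 := le_trans hle (min_le_right _ _)
          have h3 := pow_le_pow_left₀ hrnn hle2 2
          rwa [Real.sq_sqrt (by positivity)] at h3
        have hθ1 : |θ| ≤ 1 := by
          rw [abs_of_nonneg hθnn, hθdef]
          calc (1+ε)*r ≤ (1+ε)*(1/(1+ε)) := by
                exact mul_le_mul_of_nonneg_left h1 h1ε.le
            _ = 1 := by field_simp
        have hcb := Real.cos_bound hθ1
        have hkey : η ≤ Real.cos θ - 1 + r^2/2 := by
          rw [hf_eq] at hchord; linarith
        have e1 : Real.cos θ ≤ 1 - θ^2/2 + θ^4 * (5/96) := by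
          have habs := (abs_le.mp hcb).2
          have : |θ|^4 = θ^4 := by rw [abs_of_nonneg hθnn]
          linarith [this ▸ habs]
        have e2 : θ^2 = (1+ε)^2 * r^2 := by rw [hθdef]; ring
        have e3 : θ^4 = (1+ε)^4 * r^4 := by rw [hθdef]; ring
        have e4 : (1+ε)^4 * r^4 * (5/96) ≤ r^2 * (ε*(2+ε)) * (1/4) := by
          have h5 : r^2*r^2 ≤ r^2 * ((24/5)*(ε*(2+ε))/(1+ε)^4) :=
            mul_le_mul_of_nonneg_left h2 (sq_nonneg r)
          calc (1+ε)^4 * r^4 * (5/96) = ((1+ε)^4*(5/96)) * (r^2*r^2) := by ring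
            _ ≤ ((1+ε)^4*(5/96)) * (r^2 * ((24/5)*(ε*(2+ε))/(1+ε)^4)) := by
                exact mul_le_mul_of_nonneg_left h5 (by positivity)
            _ = r^2 * (ε*(2+ε)) * (1/4) := by field_simp; ring
        have e5 : η ≤ r^2/2 - θ^2/2 + θ^4*(5/96) := by linarith
        have e6 : r^2/2 - θ^2/2 = -(ε*(2+ε))*r^2/2 := by rw [e2]; ring
        have e8 : θ^4*(5/96) ≤ r^2*(ε*(2+ε))*(1/4) := by
          rw [e3]; linarith [e4]
        have e7 : 0 ≤ (ε*(2+ε))*r^2 := by positivity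
        linarith only [e5, e6, e7, e8, hηpos]
      -- step B : lower bound for sin θ
      have hθmem : θ ∈ Set.Icc ((1+ε)*r0) C := by
        constructor
        · rw [hθdef]; exact mul_le_mul_of_nonneg_left hrr0.le h1ε.le
        · rw [hθdef, hCdef]; exact mul_le_mul_of_nonneg_left hrv.le h1ε.le
      have hsin := hm θ hθmem
      have hsinpos : 0 < Real.sin θ := lt_of_lt_of_le hmpos hsin
      -- step C/D : strict quadratic bound
      have hf2 : 1 - ⟪y z, y w⟫^2 < (1+ε)^2 * Real.sin θ^2 := by
        have hpyth := Real.sin_sq_add_cos_sq θ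
        have hc1 := Real.cos_le_one θ
        have h2' : 2*η < (ε*(2+ε)) * m^2 := by
          have h2a := lt_of_lt_of_le hηlt (hη0def ▸ min_le_right 1 (ε*(2+ε) * m^2 / 2))
          linarith
        have h3 : m^2 ≤ Real.sin θ^2 := pow_le_pow_left₀ hmpos.le hsin 2
        have h4 : (ε*(2+ε)) * m^2 ≤ (ε*(2+ε)) * Real.sin θ^2 :=
          mul_le_mul_of_nonneg_left h3 (by positivity)
        rw [hf_eq]
        have hA1 : 1 - (Real.cos θ - η)^2 ≤ Real.sin θ^2 + 2*η := by
          have hmm : 2*η*Real.cos θ ≤ 2*η := by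
            nlinarith [hc1, hηpos]
          nlinarith [sq_nonneg η, hpyth]
        have e9 : (1+ε)^2*Real.sin θ^2 = Real.sin θ^2 + (ε*(2+ε))*Real.sin θ^2 := by ring
        linarith
      -- step E : conclude
      have hEd := deriv_inner_bound y hy hy' hnorm hspeed hz_mem (y w) hywnorm
      have hrhs : 0 < (1+ε) * Real.sin θ := by positivity
      have hsqrt : Real.sqrt (1 - ⟪y z, y w⟫^2) < (1+ε) * Real.sin θ := by
        rw [Real.sqrt_lt' hrhs]
        calc 1 - ⟪y z, y w⟫^2 < (1+ε)^2 * Real.sin θ^2 := hf2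
          _ = ((1+ε)*Real.sin θ)^2 := by ring
      calc -⟪deriv y z, y w⟫ ≤ |⟪deriv y z, y w⟫| := neg_le_abs _
        _ ≤ Real.sqrt (1 - ⟪y z, y w⟫^2) := hEd
        _ < (1+ε) * Real.sin θ := hsqrt
    have hfence := image_le_of_deriv_right_lt_deriv_boundary hfcont hf' ha hBd bound
      (right_mem_Icc.mpr hwv.le)
    rw [← hCdef] at hfence
    linarith
  -- let η → 0
  by_contra hc2
  push_neg at hc2
  have hδ : 0 < Real.cos C - ⟪y v, y w⟫ := by linarith
  have := hη (min (η0/2) ((Real.cos C - ⟪y v, y w⟫)/2)) (lt_min (by linarith) (by linarith))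
    (lt_of_le_of_lt (min_le_left _ _) (by linarith))
  have h5 : min (η0/2) ((Real.cos C - ⟪y v, y w⟫)/2) ≤ (Real.cos C - ⟪y v, y w⟫)/2 :=
    min_le_right _ _
  linarith

private lemma tangent_aux2 (y : ℝ → E3) (hy : Differentiable ℝ y)
    (hy' : Continuous (deriv y))
    (hnorm : ∀ t ∈ Set.Icc 0 π, ‖y t‖ = 1)
    (hspeed : ∀ t ∈ Set.Icc 0 π, ‖deriv y t‖ ≤ 1)
    {w v : ℝ} (hw0 : 0 ≤ w) (hwv : w < v) (hvπ : v ≤ π) (hgap : v - w < π) :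
    Real.cos (v - w) ≤ ⟪y v, y w⟫ := by
  by_contra hcon
  push_neg at hcon
  have hvw : 0 < v - w := by linarith
  set δ := Real.cos (v - w) - ⟪y v, y w⟫ with hδdef
  clear_value δ
  have hδpos : 0 < δ := by rw [hδdef]; linarith
  set ε := min (δ / (2 * (v - w))) ((π - (v - w)) / (2 * (v - w))) with hεdef
  clear_value ε
  have hεpos : 0 < ε := by
    rw [hεdef]
    exact lt_min (div_pos hδpos (by linarith)) (div_pos (by linarith) (by linarith))
  have hε1 : ε ≤ δ / (2 * (v - w)) := hεdef ▸ min_le_left _ _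
  have hε2 : ε ≤ (π - (v - w)) / (2 * (v - w)) := hεdef ▸ min_le_right _ _
  have hεvw1 : ε * (v - w) ≤ δ / 2 := by
    have := mul_le_mul_of_nonneg_right hε1 hvw.le
    rwa [div_mul_eq_mul_div, mul_comm (2:ℝ) (v-w), ← div_div,
      mul_div_assoc, div_self hvw.ne', mul_one] at this
  have hεvw2 : ε * (v - w) ≤ (π - (v - w)) / 2 := by
    have := mul_le_mul_of_nonneg_right hε2 hvw.le
    rwa [div_mul_eq_mul_div, mul_comm (2:ℝ) (v-w), ← div_div,
      mul_div_assoc, div_self hvw.ne', mul_one] at this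
  have hC : (1 + ε) * (v - w) < π := by nlinarith
  have hmain := tangent_aux y hy hy' hnorm hspeed hw0 hwv hvπ hgap hεpos hC
  have hlip := cos_lip ((1+ε)*(v-w)) (v - w)
  have habs : |(1+ε)*(v-w) - (v-w)| = ε*(v-w) := by
    rw [show (1+ε)*(v-w) - (v-w) = ε*(v-w) by ring, abs_of_nonneg (by positivity)]
  rw [habs] at hlip
  have := (abs_le.mp hlip).1
  linarith

private lemma tangent_lemma (y : ℝ → E3) (hy : Differentiable ℝ y)
    (hy' : Continuous (deriv y))
    (hnorm : ∀ t ∈ Set.Icc 0 π, ‖y t‖ = 1)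
    (hspeed : ∀ t ∈ Set.Icc 0 π, ‖deriv y t‖ ≤ 1)
    {w v : ℝ} (hw0 : 0 ≤ w) (hwv : w ≤ v) (hvπ : v ≤ π) :
    Real.cos (v - w) ≤ ⟪y v, y w⟫ := by
  rcases eq_or_lt_of_le hwv with rfl | hlt
  · rw [sub_self, Real.cos_zero, real_inner_self_eq_norm_sq, hnorm w ⟨hw0, hwv.trans hvπ⟩]
    norm_num
  by_contra hcon
  push_neg at hcon
  have hvw : 0 < v - w := by linarith
  set δ := Real.cos (v - w) - ⟪y v, y w⟫ with hδdef
  clear_value δ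
  have hδpos : 0 < δ := by rw [hδdef]; linarith
  set ρ := min ((v - w)/2) (δ/4) with hρdef
  clear_value ρ
  have hρpos : 0 < ρ := by rw [hρdef]; exact lt_min (by positivity) (by positivity)
  have hρ1 : ρ ≤ (v - w)/2 := hρdef ▸ min_le_left _ _
  have hρ2 : ρ ≤ δ/4 := hρdef ▸ min_le_right _ _
  have hw'0 : 0 ≤ w + ρ := by linarith
  have hw'v : w + ρ < v := by linarith
  have hgap' : v - (w + ρ) < π := by
    have : v - w ≤ π := by linarith
    linarith
  have h1 := tangent_aux2 y hy hy' hnorm hspeed hw'0 hw'v hvπ hgap'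
  -- compare inner products
  have hw_mem : w ∈ Set.Icc 0 π := ⟨hw0, by linarith⟩
  have hw'_mem : w + ρ ∈ Set.Icc 0 π := ⟨hw'0, by linarith⟩
  have hv_mem : v ∈ Set.Icc 0 π := ⟨by linarith, hvπ⟩
  have h2 : |⟪y v, y (w + ρ)⟫ - ⟪y v, y w⟫| ≤ ρ := by
    have hdiff : ⟪y v, y (w + ρ)⟫ - ⟪y v, y w⟫ = ⟪y v, y (w + ρ) - y w⟫ := by
      rw [inner_sub_right]
    rw [hdiff]
    calc |⟪y v, y (w + ρ) - y w⟫| ≤ ‖y v‖ * ‖y (w + ρ) - y w‖ := abs_real_inner_le_norm _ _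
      _ ≤ 1 * ρ := by
          rw [hnorm v hv_mem]
          have hl := y_lip y hy hspeed hw'_mem hw_mem
          rw [show w + ρ - w = ρ by ring, abs_of_nonneg hρpos.le] at hl
          simpa using hl
      _ = ρ := one_mul _
  have h3 := cos_lip (v - (w + ρ)) (v - w)
  rw [show v - (w + ρ) - (v - w) = -ρ by ring, abs_neg, abs_of_nonneg hρpos.le] at h3
  have h3' := (abs_le.mp h3).1
  have h2' := (abs_le.mp h2).2
  linarith

private lemma chord_obtuse (x : ℝ → EuclideanSpace ℝ (Fin 3))
    (hC2 : ContDiff ℝ 2 x)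
    (hunit : ∀ t ∈ Set.Icc 0 Real.pi, ‖deriv x t‖ = 1)
    (hcurv : ∀ u ∈ Set.Icc 0 Real.pi, ‖deriv (deriv x) u‖ ≤ 1)
    {s t u : ℝ} (h0 : 0 ≤ s) (hst : s ≤ t) (htu : t ≤ u) (hu : u ≤ Real.pi) :
    0 ≤ ⟪x u - x t, x t - x s⟫ := by
  have hx1 : Differentiable ℝ x := hC2.differentiable (by norm_num)
  have hx'cd : ContDiff ℝ 1 (deriv x) :=
    (contDiff_succ_iff_deriv.mp (show ContDiff ℝ (1+1) x from by norm_num; exact hC2)).2.2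
  have hx'diff : Differentiable ℝ (deriv x) := hx'cd.differentiable one_ne_zero
  have hx'cont : Continuous (deriv x) := hx'diff.continuous
  have hx''cont : Continuous (deriv (deriv x)) := (contDiff_one_iff_deriv.mp hx'cd).2
  have innerlb : ∀ v ∈ Set.Icc t u, ∀ w ∈ Set.Icc s t,
      Real.cos (v - w) ≤ ⟪deriv x v, deriv x w⟫ := by
    intro v hv w hw
    exact tangent_lemma (deriv x) hx'diff hx''cont hunit hcurv
      (by linarith [hw.1]) (le_trans hw.2 hv.1) (le_trans hv.2 hu)
  -- FTC for inner products with a fixed vector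
  have ftc : ∀ (c : EuclideanSpace ℝ (Fin 3)) (p q : ℝ),
      ⟪x q - x p, c⟫ = ∫ v in p..q, ⟪deriv x v, c⟫ := by
    intro c p q
    have hder : ∀ v ∈ Set.uIcc p q, HasDerivAt (fun v => ⟪x v, c⟫) (⟪deriv x v, c⟫) v := by
      intro v _
      simpa using HasDerivAt.inner ℝ ((hx1 v).hasDerivAt) (hasDerivAt_const v c)
    have hint : IntervalIntegrable (fun v => ⟪deriv x v, c⟫) MeasureTheory.volume p q :=
      (Continuous.inner (𝕜 := ℝ) hx'cont continuous_const).intervalIntegrable p q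
    rw [intervalIntegral.integral_eq_sub_of_hasDerivAt hder hint, inner_sub_left]
  -- bound for fixed w ∈ [s,t]
  have step : ∀ w ∈ Set.Icc s t,
      Real.sin (u - w) - Real.sin (t - w) ≤ ⟪x u - x t, deriv x w⟫ := by
    intro w hw
    rw [ftc (deriv x w) t u]
    have hmono : ∫ v in t..u, Real.cos (v - w) ≤ ∫ v in t..u, ⟪deriv x v, deriv x w⟫ := by
      apply intervalIntegral.integral_mono_on htu
      · exact (Real.continuous_cos.comp (continuous_id.sub continuous_const)).intervalIntegrable _ _
      · exact (Continuous.inner (𝕜 := ℝ) hx'cont continuous_const).intervalIntegrable _ _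
      · intro v hv
        exact innerlb v hv w hw
    have hval : ∫ v in t..u, Real.cos (v - w) = Real.sin (u - w) - Real.sin (t - w) := by
      rw [intervalIntegral.integral_comp_sub_right (fun v => Real.cos v) w, integral_cos]
    linarith
  -- integrate in w
  have main : ⟪x t - x s, x u - x t⟫ = ∫ w in s..t, ⟪deriv x w, x u - x t⟫ :=
    ftc (x u - x t) s t
  have flip : ⟪x u - x t, x t - x s⟫ = ∫ w in s..t, ⟪deriv x w, x u - x t⟫ := by
    rw [← main, real_inner_comm]
  rw [flip]
  have hmono2 : ∫ w in s..t, (Real.sin (u - w) - Real.sin (t - w))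
      ≤ ∫ w in s..t, ⟪deriv x w, x u - x t⟫ := by
    apply intervalIntegral.integral_mono_on hst
    · exact ((Real.continuous_sin.comp (continuous_const.sub continuous_id)).sub
        (Real.continuous_sin.comp (continuous_const.sub continuous_id))).intervalIntegrable _ _
    · exact (Continuous.inner (𝕜 := ℝ) hx'cont continuous_const).intervalIntegrable _ _
    · intro w hw
      rw [real_inner_comm]
      exact step w hw
  have hint1 : IntervalIntegrable (fun w => Real.sin (u - w)) MeasureTheory.volume s t :=
    (Real.continuous_sin.comp (continuous_const.sub continuous_id)).intervalIntegrable _ _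
  have hint2 : IntervalIntegrable (fun w => Real.sin (t - w)) MeasureTheory.volume s t :=
    (Real.continuous_sin.comp (continuous_const.sub continuous_id)).intervalIntegrable _ _
  have i1 : ∫ w in s..t, Real.sin (u - w) = Real.cos (u - t) - Real.cos (u - s) := by
    rw [intervalIntegral.integral_comp_sub_left (fun v => Real.sin v) u, integral_sin]
  have i2 : ∫ w in s..t, Real.sin (t - w) = 1 - Real.cos (t - s) := by
    rw [intervalIntegral.integral_comp_sub_left (fun v => Real.sin v) t, integral_sin]
    simp
  have isub : ∫ w in s..t, (Real.sin (u - w) - Real.sin (t - w))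
      = (Real.cos (u - t) - Real.cos (u - s)) - (1 - Real.cos (t - s)) := by
    rw [intervalIntegral.integral_sub hint1 hint2, i1, i2]
  have htrig := trig_key (A := u - t) (B := t - s) (by linarith) (by linarith) (by linarith)
  rw [show (u - t) + (t - s) = u - s by ring] at htrig
  rw [isub] at hmono2
  linarith

/-- For four points in order along an arc of length `≤ π` of a unit-speed curve with
curvature `≤ 1`, the minimum distance between the chords `[x(a),x(b)]` and
`[x(c),x(d)]` is realized at the closest endpoints `x(b)`, `x(c)`. -/
theorem min_dist_segments_at_endpoints (x : ℝ → EuclideanSpace ℝ (Fin 3))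
    (hC2 : ContDiff ℝ 2 x)
    (hunit : ∀ t ∈ Set.Icc 0 Real.pi, ‖deriv x t‖ = 1)
    (hcurv : ∀ u ∈ Set.Icc 0 Real.pi, ‖deriv (deriv x) u‖ ≤ 1)
    (a b c d : ℝ) (ha : 0 ≤ a) (hab : a < b) (hbc : b < c) (hcd : c < d)
    (hd : d ≤ Real.pi) :
    sInf (Set.image2 dist (segment ℝ (x a) (x b)) (segment ℝ (x c) (x d)))
      = dist (x b) (x c) := by
  have key1 := chord_obtuse x hC2 hunit hcurv (s := a) (t := b) (u := c)
    ha hab.le hbc.le (by linarith)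
  have key2 := chord_obtuse x hC2 hunit hcurv (s := b) (t := c) (u := d)
    (by linarith) hbc.le hcd.le hd
  -- reorient
  have key1' : 0 ≤ ⟪x b - x c, x a - x b⟫ := by
    rw [show x b - x c = -(x c - x b) from (neg_sub _ _).symm,
      show x a - x b = -(x b - x a) from (neg_sub _ _).symm, inner_neg_neg]
    exact key1
  have key2' : ⟪x b - x c, x d - x c⟫ ≤ 0 := by
    rw [show x b - x c = -(x c - x b) from (neg_sub _ _).symm, inner_neg_left,
      real_inner_comm]
    linarith
  -- the lower bound
  have lb : ∀ p ∈ segment ℝ (x a) (x b), ∀ q ∈ segment ℝ (x c) (x d),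
      dist (x b) (x c) ≤ dist p q := by
    intro p hp q hq
    rw [segment_symm, segment_eq_image'] at hp
    rw [segment_eq_image'] at hq
    obtain ⟨α, hα, rfl⟩ := hp
    obtain ⟨β, hβ, rfl⟩ := hq
    rw [dist_eq_norm, dist_eq_norm]
    have hrw : (x b + α • (x a - x b)) - (x c + β • (x d - x c))
        = (x b - x c) + (α • (x a - x b) - β • (x d - x c)) := by abel
    rw [hrw]
    have hcross : 0 ≤ ⟪x b - x c, α • (x a - x b) - β • (x d - x c)⟫ := by
      rw [inner_sub_right, real_inner_smul_right, real_inner_smul_right]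
      have h1 := mul_nonneg hα.1 key1'
      have h2 := mul_nonpos_of_nonneg_of_nonpos hβ.1 key2'
      linarith
    have hsq : ‖x b - x c‖^2 ≤ ‖(x b - x c) + (α • (x a - x b) - β • (x d - x c))‖^2 := by
      rw [norm_add_sq_real]
      nlinarith [sq_nonneg ‖α • (x a - x b) - β • (x d - x c)‖, hcross]
    have := Real.sqrt_le_sqrt hsq
    rwa [Real.sqrt_sq (norm_nonneg _), Real.sqrt_sq (norm_nonneg _)] at this
  have hmem : dist (x b) (x c) ∈
      Set.image2 dist (segment ℝ (x a) (x b)) (segment ℝ (x c) (x d)) :=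
    Set.mem_image2_of_mem (right_mem_segment ℝ _ _) (left_mem_segment ℝ _ _)
  refine le_antisymm (csInf_le ⟨dist (x b) (x c), ?_⟩ hmem) (le_csInf ⟨_, hmem⟩ ?_)
  · rintro r ⟨p, hp, q, hq, rfl⟩
    exact lb p hp q hq
  · rintro r ⟨p, hp, q, hq, rfl⟩
    exact lb p hp q hq
end

section
/- Let α be a C² smooth arc in ℝ³ of length δ whose radius of curvature is everywhere ≥ r ≥ δ, and let e be the chord joining the endpoints of α. Then every point of α is at distance at most δ²/(√48 · r) from the segment e. -/
open Set Metric
open scoped RealInnerProductSpace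

lemma arc_aux (r δ : ℝ) (hδ : 0 < δ) (hr : 0 < r)
    (x : ℝ → EuclideanSpace ℝ (Fin 3))
    (hd1 : Differentiable ℝ x) (hd2 : Differentiable ℝ (deriv x))
    (hcurv : ∀ u ∈ Set.Icc 0 δ, ‖deriv (deriv x) u‖ ≤ 1/r)
    (t : ℝ) (ht : t ∈ Set.Icc 0 δ) :
    ‖x t - (x 0 + (t/δ) • (x δ - x 0))‖ ≤ t * (δ - t) / (2*r) := by
  obtain ⟨ht0, htδ⟩ := ht
  by_cases hc : x t - (x 0 + (t/δ) • (x δ - x 0)) = 0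
  · rw [hc, norm_zero]
    have : 0 ≤ δ - t := by linarith
    positivity
  set c := x t - (x 0 + (t/δ) • (x δ - x 0)) with hcdef
  set e : EuclideanSpace ℝ (Fin 3) := ‖c‖⁻¹ • c with hedef
  have hcnorm : (0:ℝ) < ‖c‖ := norm_pos_iff.mpr hc
  have henorm : ‖e‖ = 1 := by
    rw [hedef, norm_smul, norm_inv, norm_norm, inv_mul_cancel₀ hcnorm.ne']
  set v := x δ - x 0 with hvdef
  set u : ℝ → ℝ := fun s => (inner ℝ (x s - (x 0 + (s/δ) • v)) e : ℝ) + (s^2 - s*δ)/(2*r) with hudef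
  set u' : ℝ → ℝ := fun s => (inner ℝ (deriv x s - (1/δ) • v) e : ℝ) + (2*s - δ)/(2*r) with hu'def
  have hu' : ∀ s, HasDerivAt u (u' s) s := by
    intro s
    have hF : HasDerivAt (fun s => x s - (x 0 + (s/δ) • v))
        (deriv x s - (1/δ) • v) s := by
      have h1 : HasDerivAt (fun s : ℝ => (s/δ) • v) ((1/δ) • v) s := by
        have := ((hasDerivAt_id s).div_const δ).smul_const v
        simpa using this
      have := ((hd1 s).hasDerivAt).sub ((hasDerivAt_const s (x 0)).add h1)
      exact this.congr_deriv (by simp)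
    have hinner := hF.inner ℝ (hasDerivAt_const s e)
    have hpoly : HasDerivAt (fun s : ℝ => (s^2 - s*δ)/(2*r)) ((2*s - δ)/(2*r)) s := by
      have := ((hasDerivAt_pow 2 s).sub ((hasDerivAt_id s).mul_const δ)).div_const (2*r)
      refine this.congr_deriv ?_
      norm_num
    have := hinner.add hpoly
    simp only [inner_zero_right, zero_add] at this
    exact this
  set u'' : ℝ → ℝ := fun s => (inner ℝ (deriv (deriv x) s) e : ℝ) + 1/r with hu''def
  have hu'' : ∀ s, HasDerivAt u' (u'' s) s := by
    intro s
    have hF : HasDerivAt (fun s => deriv x s - (1/δ) • v)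
        (deriv (deriv x) s) s := by
      simpa using ((hd2 s).hasDerivAt).sub_const ((1/δ) • v)
    have hinner := hF.inner ℝ (hasDerivAt_const s e)
    have hpoly : HasDerivAt (fun s : ℝ => (2*s - δ)/(2*r)) (1/r) s := by
      have := (((hasDerivAt_id s).const_mul 2).sub_const δ).div_const (2*r)
      refine this.congr_deriv ?_
      field_simp
    have := hinner.add hpoly
    simp only [inner_zero_right, zero_add] at this
    exact this
  have hconv : ConvexOn ℝ (Set.Icc 0 δ) u := by
    apply convexOn_of_hasDerivWithinAt2_nonneg (convex_Icc 0 δ)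
      (fun s _ => ((hu' s).differentiableAt.continuousAt).continuousWithinAt)
      (fun s _ => (hu' s).hasDerivWithinAt)
      (fun s _ => (hu'' s).hasDerivWithinAt)
    intro s hs
    rw [interior_Icc] at hs
    have hb := hcurv s ⟨hs.1.le, hs.2.le⟩
    have habs : |(inner ℝ (deriv (deriv x) s) e : ℝ)| ≤ 1/r := by
      calc |(inner ℝ (deriv (deriv x) s) e : ℝ)| ≤ ‖deriv (deriv x) s‖ * ‖e‖ :=
            abs_real_inner_le_norm _ _
        _ = ‖deriv (deriv x) s‖ := by rw [henorm, mul_one]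
        _ ≤ 1/r := hb
    have := neg_abs_le (inner ℝ (deriv (deriv x) s) e : ℝ)
    simp only [hu''def]
    linarith [abs_nonneg (inner ℝ (deriv (deriv x) s) e : ℝ)]
  have hu0 : u 0 = 0 := by
    simp [hudef]
  have huδ : u δ = 0 := by
    have h1 : δ/δ = 1 := div_self hδ.ne'
    have h2 : x δ - (x 0 + (δ/δ) • v) = 0 := by
      rw [h1, one_smul, hvdef]; abel
    simp only [hudef, h2, inner_zero_left]
    ring
  have hmem0 : (0:ℝ) ∈ Set.Icc (0:ℝ) δ := by constructor <;> linarith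
  have hmemδ : δ ∈ Set.Icc (0:ℝ) δ := by constructor <;> linarith
  have ha : (0:ℝ) ≤ 1 - t/δ := by
    have : t/δ ≤ 1 := (div_le_one hδ).mpr htδ
    linarith
  have hb : (0:ℝ) ≤ t/δ := by positivity
  have hab : (1 - t/δ) + t/δ = 1 := by ring
  have hkey := hconv.2 hmem0 hmemδ ha hb hab
  have hteq : (1 - t/δ) • (0:ℝ) + (t/δ) • δ = t := by
    simp only [smul_eq_mul]; field_simp; ring
  rw [hteq, hu0, huδ] at hkey
  simp only [smul_eq_mul, mul_zero, add_zero] at hkey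
  -- hkey : u t ≤ 0
  have hgt : (inner ℝ c e : ℝ) = ‖c‖ := by
    rw [hedef, real_inner_smul_right, real_inner_self_eq_norm_sq]
    field_simp
  have hut : u t = ‖c‖ + (t^2 - t*δ)/(2*r) := by
    simp only [hudef]
    rw [← hcdef, hgt]
  rw [hut] at hkey
  have hre : (t*δ - t^2)/(2*r) = -((t^2 - t*δ)/(2*r)) := by ring
  have : ‖c‖ ≤ (t*δ - t^2)/(2*r) := by linarith
  calc ‖c‖ ≤ (t*δ - t^2)/(2*r) := this
    _ = t * (δ - t)/(2*r) := by ring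

/-- Every point of a `C²` arc of length `δ ≤ r` with curvature `≤ 1/r` lies within
distance `δ²/(√48 · r)` of the chord joining its endpoints. -/
theorem arc_close_to_chord (r δ : ℝ) (hδ : 0 < δ) (hδr : δ ≤ r)
    (x : ℝ → EuclideanSpace ℝ (Fin 3)) (hC2 : ContDiff ℝ 2 x)
    (hunit : ∀ t ∈ Set.Icc 0 δ, ‖deriv x t‖ = 1)
    (hcurv : ∀ u ∈ Set.Icc 0 δ, ‖deriv (deriv x) u‖ ≤ 1/r) :
    ∀ t ∈ Set.Icc 0 δ,
      Metric.infDist (x t) (segment ℝ (x 0) (x δ)) ≤ δ^2/(Real.sqrt 48 * r) := by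
  intro t ht
  have hr : (0:ℝ) < r := lt_of_lt_of_le hδ hδr
  have hd1 : Differentiable ℝ x := hC2.differentiable (by norm_num)
  have hd2 : Differentiable ℝ (deriv x) := by
    have h2 : ContDiff ℝ ((1 : WithTop ℕ∞)+1) x := by
      convert hC2 using 2; norm_num
    have := (contDiff_succ_iff_deriv.mp h2).2.2
    exact this.differentiable (by norm_num)
  set q := x 0 + (t/δ) • (x δ - x 0) with hqdef
  have hmem : q ∈ segment ℝ (x 0) (x δ) := by
    refine ⟨1 - t/δ, t/δ, ?_, ?_, by ring, ?_⟩
    · have : t/δ ≤ 1 := (div_le_one hδ).mpr ht.2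
      linarith
    · have := ht.1; positivity
    · rw [hqdef]; module
  have hle := arc_aux r δ hδ hr x hd1 hd2 hcurv t ht
  have h1 : Metric.infDist (x t) (segment ℝ (x 0) (x δ)) ≤ ‖x t - q‖ := by
    rw [← dist_eq_norm]
    exact Metric.infDist_le_dist_of_mem hmem
  have h2 : t * (δ - t) / (2*r) ≤ δ^2/(8*r) := by
    rw [div_le_div_iff₀ (by positivity) (by positivity)]
    nlinarith [ht.1, ht.2, sq_nonneg (δ - 2*t)]
  have hsqrt : Real.sqrt 48 ≤ 8 := by
    rw [show (8:ℝ) = Real.sqrt 64 by rw [show (64:ℝ) = 8^2 by norm_num, Real.sqrt_sq]; norm_num]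
    exact Real.sqrt_le_sqrt (by norm_num)
  have hsqrtpos : (0:ℝ) < Real.sqrt 48 := Real.sqrt_pos.mpr (by norm_num)
  have h3 : δ^2/(8*r) ≤ δ^2/(Real.sqrt 48 * r) := by
    apply div_le_div_of_nonneg_left (by positivity) (by positivity)
    nlinarith
  linarith
end

section
/- Let α, β be C² smooth arcs in ℝ³, each of length δ, each with radius of curvature everywhere ≥ r ≥ δ. Let e, f be the chords joining the endpoints of α and β respectively. Then |MD(e,f) - MD(α,β)| ≤ √3·δ²/(6r) ≤ (√3/6)·r, where MD denotes the minimum Euclidean distance between two sets. -/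
open Set intervalIntegral

local notation "E3" => EuclideanSpace ℝ (Fin 3)

lemma deriv_lip {r δ : ℝ} (x : ℝ → E3) (hx : ContDiff ℝ 2 x)
    (hc : ∀ u ∈ Icc 0 δ, ‖deriv (deriv x) u‖ ≤ 1/r) {a s : ℝ}
    (ha : a ∈ Icc 0 δ) (hs : s ∈ Icc 0 δ) :
    ‖deriv x s - deriv x a‖ ≤ (1/r) * |s - a| := by
  have hx' : ContDiff ℝ (1+1) x := by norm_num; exact hx
  have h1 : ContDiff ℝ 1 (deriv x) := (contDiff_succ_iff_deriv.mp hx').2.2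
  have hd : ∀ u ∈ Icc (0:ℝ) δ, DifferentiableAt ℝ (deriv x) u :=
    fun u _ => h1.differentiable one_ne_zero u
  have := Convex.norm_image_sub_le_of_norm_deriv_le hd hc (convex_Icc 0 δ) ha hs
  simpa [Real.norm_eq_abs] using this

lemma taylor_bd {r δ : ℝ} (hr : 0 < r) (x : ℝ → E3) (hx : ContDiff ℝ 2 x)
    (hc : ∀ u ∈ Icc 0 δ, ‖deriv (deriv x) u‖ ≤ 1/r) {a b c : ℝ} (hab : a ≤ b)
    (ha : a ∈ Icc 0 δ) (hb : b ∈ Icc 0 δ) (hcab : c = a ∨ c = b) :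
    ‖x b - x a - (b - a) • deriv x c‖ ≤ (b-a)^2/(2*r) := by
  have hdiff : Differentiable ℝ x := hx.differentiable two_ne_zero
  have hcont : Continuous (deriv x) := by
    have hx' : ContDiff ℝ (1+1) x := by norm_num; exact hx
    exact ((contDiff_succ_iff_deriv.mp hx').2.2).continuous
  have hftc : ∫ s in a..b, deriv x s = x b - x a :=
    integral_deriv_eq_sub (fun u _ => hdiff u) (hcont.intervalIntegrable a b)
  have hmem : ∀ s ∈ Set.uIcc a b, s ∈ Icc 0 δ := by
    intro s hs
    rw [uIcc_of_le hab] at hs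
    exact ⟨le_trans ha.1 hs.1, le_trans hs.2 hb.2⟩
  have hc' : c ∈ Icc 0 δ := by rcases hcab with rfl | rfl <;> assumption
  have heq : x b - x a - (b - a) • deriv x c = ∫ s in a..b, (deriv x s - deriv x c) := by
    rw [intervalIntegral.integral_sub (hcont.intervalIntegrable a b)
      (intervalIntegrable_const), hftc, intervalIntegral.integral_const]
  rw [heq]
  have hbound : ∀ s ∈ Set.uIcc a b, ‖deriv x s - deriv x c‖ ≤ (1/r) * |s - c| :=
    fun s hs => deriv_lip x hx hc hc' (hmem s hs)
  have hI : IntervalIntegrable (fun s => (1/r) * |s - c|) MeasureTheory.volume a b :=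
    (Continuous.intervalIntegrable (by continuity) a b)
  have key : ‖∫ s in a..b, (deriv x s - deriv x c)‖ ≤ ∫ s in a..b, (1/r) * |s - c| := by
    refine (intervalIntegral.norm_integral_le_integral_norm hab).trans ?_
    apply intervalIntegral.integral_mono_on hab _ hI
    · intro s hs
      exact hbound s (by rw [uIcc_of_le hab]; exact hs)
    · exact ((hcont.sub continuous_const).norm.intervalIntegrable a b)
  have hval : ∫ s in a..b, (1/r) * |s - c| = (b-a)^2/(2*r) := by
    rcases hcab with rfl | rfl
    · have : EqOn (fun s => (1/r) * |s - c|) (fun s => (1/r) * (s - c)) (Set.uIcc c b) := by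
        intro s hs
        rw [uIcc_of_le hab] at hs
        show (1/r) * |s - c| = (1/r) * (s - c)
        rw [abs_of_nonneg (sub_nonneg.mpr hs.1)]
      rw [intervalIntegral.integral_congr this]
      rw [intervalIntegral.integral_const_mul,
        intervalIntegral.integral_sub intervalIntegrable_id intervalIntegrable_const,
        integral_id, intervalIntegral.integral_const]
      field_simp
      ring
    · have : EqOn (fun s => (1/r) * |s - c|) (fun s => (1/r) * (c - s)) (Set.uIcc a c) := by
        intro s hs
        rw [uIcc_of_le hab] at hs
        show (1/r) * |s - c| = (1/r) * (c - s)
        rw [abs_sub_comm, abs_of_nonneg (sub_nonneg.mpr hs.2)]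
      rw [intervalIntegral.integral_congr this]
      rw [intervalIntegral.integral_const_mul,
        intervalIntegral.integral_sub intervalIntegrable_const intervalIntegrable_id,
        integral_id, intervalIntegral.integral_const]
      field_simp
      ring
  rw [← hval]
  exact key

lemma arc_chord {r δ : ℝ} (hδ : 0 < δ) (hr : 0 < r) (x : ℝ → E3) (hx : ContDiff ℝ 2 x)
    (hc : ∀ u ∈ Icc 0 δ, ‖deriv (deriv x) u‖ ≤ 1/r) {t : ℝ} (ht : t ∈ Icc 0 δ) :
    ‖x t - ((1 - t/δ) • x 0 + (t/δ) • x δ)‖ ≤ δ^2/(8*r) := by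
  have h0 : (0:ℝ) ∈ Icc 0 δ := ⟨le_refl 0, hδ.le⟩
  have hδm : δ ∈ Icc 0 δ := ⟨hδ.le, le_refl δ⟩
  have hA : ‖x t - x 0 - (t - 0) • deriv x t‖ ≤ (t-0)^2/(2*r) :=
    taylor_bd hr x hx hc ht.1 h0 ht (Or.inr rfl)
  have hB : ‖x δ - x t - (δ - t) • deriv x t‖ ≤ (δ-t)^2/(2*r) :=
    taylor_bd hr x hx hc ht.2 ht hδm (Or.inl rfl)
  set v := deriv x t
  have hid : x t - ((1 - t/δ) • x 0 + (t/δ) • x δ)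
      = (1 - t/δ) • (x t - x 0 - t • v) - (t/δ) • (x δ - x t - (δ - t) • v) := by
    match_scalars <;> field_simp <;> ring
  rw [hid]
  have h1 : (0:ℝ) ≤ 1 - t/δ := by
    rw [sub_nonneg]; exact div_le_one_of_le₀ ht.2 hδ.le
  have h2 : (0:ℝ) ≤ t/δ := div_nonneg ht.1 hδ.le
  calc ‖(1 - t/δ) • (x t - x 0 - t • v) - (t/δ) • (x δ - x t - (δ - t) • v)‖
      ≤ (1 - t/δ) * ‖x t - x 0 - t • v‖ + (t/δ) * ‖x δ - x t - (δ - t) • v‖ := by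
        refine (norm_sub_le _ _).trans ?_
        rw [norm_smul, norm_smul, Real.norm_eq_abs, Real.norm_eq_abs,
          abs_of_nonneg h1, abs_of_nonneg h2]
    _ ≤ (1 - t/δ) * (t^2/(2*r)) + (t/δ) * ((δ-t)^2/(2*r)) := by
        have hA' : ‖x t - x 0 - t • v‖ ≤ t^2/(2*r) := by simpa using hA
        gcongr
    _ = t*(δ-t)/(2*r) := by field_simp; ring
    _ ≤ δ^2/(8*r) := by
        rw [div_le_div_iff₀ (by positivity) (by positivity)]
        nlinarith [mul_nonneg hr.le (sq_nonneg (2*t - δ))]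

lemma sInf_dist_le {α : Type*} [PseudoMetricSpace α] {A B A' B' : Set α}
    (hA' : A'.Nonempty) (hB' : B'.Nonempty) {ε₁ ε₂ : ℝ}
    (h1 : ∀ a' ∈ A', ∃ a ∈ A, dist a' a ≤ ε₁)
    (h2 : ∀ b' ∈ B', ∃ b ∈ B, dist b' b ≤ ε₂) :
    sInf (Set.image2 dist A B) ≤ sInf (Set.image2 dist A' B') + (ε₁ + ε₂) := by
  have hbdd : BddBelow (Set.image2 dist A B) := by
    refine ⟨0, ?_⟩
    rintro d ⟨a, ha, b, hb, rfl⟩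
    exact dist_nonneg
  rw [← sub_le_iff_le_add]
  apply le_csInf (hA'.image2 hB')
  rintro d ⟨a', ha', b', hb', rfl⟩
  obtain ⟨a, ha, hd1⟩ := h1 a' ha'
  obtain ⟨b, hb, hd2⟩ := h2 b' hb'
  have htri : dist a b ≤ dist a' b' + (ε₁ + ε₂) := by
    calc dist a b ≤ dist a a' + dist a' b' + dist b' b := dist_triangle4 a a' b' b
      _ ≤ ε₁ + dist a' b' + ε₂ := by
          rw [dist_comm a a']
          gcongr
      _ = dist a' b' + (ε₁ + ε₂) := by ring
  have := csInf_le hbdd (Set.mem_image2_of_mem ha hb)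
  linarith

/-- The minimum distance between two arcs of length `δ ≤ r` with curvature `≤ 1/r`
differs from the minimum distance between their chords by at most `√3·δ²/(6r) ≤ √3·r/6`. -/
theorem min_dist_arcs_vs_chords (r δ : ℝ) (hδ : 0 < δ) (hδr : δ ≤ r)
    (x y : ℝ → EuclideanSpace ℝ (Fin 3))
    (hxC2 : ContDiff ℝ 2 x) (hyC2 : ContDiff ℝ 2 y)
    (hxunit : ∀ t ∈ Set.Icc 0 δ, ‖deriv x t‖ = 1)
    (hyunit : ∀ t ∈ Set.Icc 0 δ, ‖deriv y t‖ = 1)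
    (hxcurv : ∀ u ∈ Set.Icc 0 δ, ‖deriv (deriv x) u‖ ≤ 1/r)
    (hycurv : ∀ u ∈ Set.Icc 0 δ, ‖deriv (deriv y) u‖ ≤ 1/r) :
    |sInf (Set.image2 dist (segment ℝ (x 0) (x δ)) (segment ℝ (y 0) (y δ)))
      - sInf (Set.image2 dist (x '' Set.Icc 0 δ) (y '' Set.Icc 0 δ))|
        ≤ Real.sqrt 3 * δ^2 / (6*r) ∧
    Real.sqrt 3 * δ^2 / (6*r) ≤ (Real.sqrt 3 / 6) * r := by
  have hr : 0 < r := hδ.trans_le hδr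
  set ε : ℝ := δ^2/(8*r) with hε
  -- correspondence t ↦ chord point
  have hcorr : ∀ (z : ℝ → E3), ContDiff ℝ 2 z → (∀ u ∈ Icc 0 δ, ‖deriv (deriv z) u‖ ≤ 1/r) →
      (∀ p ∈ segment ℝ (z 0) (z δ), ∃ a ∈ z '' Icc 0 δ, dist p a ≤ ε) ∧
      (∀ a ∈ z '' Icc 0 δ, ∃ p ∈ segment ℝ (z 0) (z δ), dist a p ≤ ε) := by
    intro z hz hzc
    constructor
    · intro p hp
      rw [segment_eq_image] at hp
      obtain ⟨θ, hθ, rfl⟩ := hp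
      refine ⟨z (θ*δ), Set.mem_image_of_mem _ ⟨mul_nonneg hθ.1 hδ.le, by nlinarith [hθ.1, hθ.2]⟩, ?_⟩
      have ht : θ*δ ∈ Icc 0 δ := ⟨mul_nonneg hθ.1 hδ.le, by nlinarith [hθ.1, hθ.2]⟩
      have := arc_chord hδ hr z hz hzc ht
      have hθδ : θ*δ/δ = θ := by field_simp
      rw [hθδ] at this
      rw [dist_eq_norm, ← norm_neg]
      convert this using 2
      exacts [rfl, by simp only [neg_sub]]
    · rintro a ⟨t, ht, rfl⟩
      refine ⟨(1 - t/δ) • z 0 + (t/δ) • z δ, ?_, ?_⟩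
      · rw [segment_eq_image]
        exact ⟨t/δ, ⟨div_nonneg ht.1 hδ.le, div_le_one_of_le₀ ht.2 hδ.le⟩, rfl⟩
      · rw [dist_eq_norm]
        exact arc_chord hδ hr z hz hzc ht
  obtain ⟨hx1, hx2⟩ := hcorr x hxC2 hxcurv
  obtain ⟨hy1, hy2⟩ := hcorr y hyC2 hycurv
  have hsegx : (segment ℝ (x 0) (x δ)).Nonempty := ⟨x 0, left_mem_segment ℝ _ _⟩
  have hsegy : (segment ℝ (y 0) (y δ)).Nonempty := ⟨y 0, left_mem_segment ℝ _ _⟩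
  have harcx : (x '' Icc 0 δ).Nonempty := ⟨x 0, Set.mem_image_of_mem _ ⟨le_refl 0, hδ.le⟩⟩
  have harcy : (y '' Icc 0 δ).Nonempty := ⟨y 0, Set.mem_image_of_mem _ ⟨le_refl 0, hδ.le⟩⟩
  have hL1 := sInf_dist_le harcx harcy hx2 hy2
  have hL2 := sInf_dist_le hsegx hsegy hx1 hy1
  have hsq : Real.sqrt 3 ≥ 3/2 := by
    nlinarith [Real.sq_sqrt (by norm_num : (3:ℝ) ≥ 0), Real.sqrt_nonneg 3]
  have hεle : ε + ε ≤ Real.sqrt 3 * δ^2 / (6*r) := by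
    rw [hε, ← add_div, div_le_div_iff₀ (by positivity) (by positivity)]
    nlinarith [mul_nonneg (mul_nonneg (sub_nonneg.mpr hsq) (sq_nonneg δ)) hr.le]
  constructor
  · rw [abs_sub_le_iff]
    constructor <;> linarith
  · rw [div_le_iff₀ (by positivity)]
    have h1 : Real.sqrt 3 * δ^2 ≤ Real.sqrt 3 * r^2 := by
      have : δ^2 ≤ r^2 := by nlinarith
      nlinarith [Real.sqrt_nonneg 3]
    nlinarith [Real.sqrt_nonneg 3]
end
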